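/- arXiv:1408.5615 — 6 statements merged into one kernel-verified Lean document; each statement's English description precedes it below -/
import Mathlib

section
/- For all m, n : ℕ, the real matrix A + n·I is positive semidefinite, where A is the adjacency matrix of the simplicial rook graph SR(m,n) and I is the identity matrix indexed by the vertex set of SR(m,n). -/
open Matrix Polynomial

/-- Vertices of the simplicial rook graph: nonnegative integer vectors of length `m` summing to `n`. -/
abbrev SRVertex (m n : ℕ) : Type := {x : Fin m → ℕ // ∑ i, x i = n}

instance (m n : ℕ) : Fintype (SRVertex m n) :=
  Fintype.subtype (Finset.Nat.antidiagonalTuple m n) fun _ =>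
    Finset.Nat.mem_antidiagonalTuple

/-- The simplicial rook graph `SR(m,n)`. -/
def SR (m n : ℕ) : SimpleGraph (SRVertex m n) where
  Adj x y := (Finset.univ.filter fun i => x.1 i ≠ y.1 i).card = 2
  symm := by
    constructor
    intro x y h
    have : (Finset.univ.filter fun i => y.1 i ≠ x.1 i)
        = (Finset.univ.filter fun i => x.1 i ≠ y.1 i) := by
      apply Finset.filter_congr
      intro i _
      simp [ne_comm]
    rw [this]; exact h
  loopless := by
    constructor
    intro x h
    simp at h

instance (m n : ℕ) : DecidableRel (SR m n).Adj := fun x y =>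
  inferInstanceAs (Decidable ((Finset.univ.filter fun i => x.1 i ≠ y.1 i).card = 2))

namespace SRPSD

open Finset
open scoped Classical

variable {m n : ℕ}

/-- `x` is obtained from `w` by adding `k` at coordinate `i`. -/
def covAt (k : ℕ) (w x : Fin m → ℕ) (i : Fin m) : Prop :=
  x = fun t => w t + if t = i then k else 0

lemma covAt.apply_self {k : ℕ} {w x : Fin m → ℕ} {i} (h : covAt k w x i) :
    x i = w i + k := by rw [h]; simp

lemma covAt.apply_ne {k : ℕ} {w x : Fin m → ℕ} {i t} (h : covAt k w x i) (ht : t ≠ i) :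
    x t = w t := by rw [h]; simp [ht]

lemma covAt.i_eq {k : ℕ} (hk : 1 ≤ k) {w x : Fin m → ℕ} {i i'}
    (h : covAt k w x i) (h' : covAt k w x i') : i = i' := by
  by_contra hne
  have h1 := h.apply_self
  have h2 := h'.apply_ne hne
  omega

lemma covAt_iff {k : ℕ} {w x : Fin m → ℕ} {i} :
    covAt k w x i ↔ k ≤ x i ∧ w = Function.update x i (x i - k) := by
  constructor
  · intro h
    have h1 := h.apply_self
    refine ⟨by omega, funext fun t => ?_⟩
    rcases eq_or_ne t i with rfl | ht
    · rw [Function.update_self]; omega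
    · rw [Function.update_of_ne ht, h.apply_ne ht]
  · rintro ⟨hk, rfl⟩
    funext t
    rcases eq_or_ne t i with rfl | ht
    · rw [Function.update_self, if_pos rfl]
      omega
    · simp [Function.update_of_ne ht, ht]

lemma ind_exists {P : Fin m → Prop} (h : ∀ i j, P i → P j → i = j) :
    (if ∃ i, P i then (1:ℝ) else 0) = ∑ i, if P i then (1:ℝ) else 0 := by
  by_cases he : ∃ i, P i
  · obtain ⟨i, hi⟩ := he
    rw [if_pos ⟨i, hi⟩, Finset.sum_eq_single i]
    · simp [hi]
    · intro j _ hj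
      exact if_neg fun hPj => hj (h j i hPj hi)
    · simp
  · rw [if_neg he, eq_comm]
    exact Finset.sum_eq_zero fun i _ => if_neg fun hi => he ⟨i, hi⟩

noncomputable def cvec (m n k : ℕ) (w : Fin m → ℕ) : SRVertex m n → ℝ :=
  fun x => if ∃ i, covAt k w x.1 i then 1 else 0

def S (m n : ℕ) : Finset (Σ _ : ℕ, Fin m → ℕ) :=
  (Finset.Icc 1 n).sigma fun k => Finset.Nat.antidiagonalTuple m (n - k)

lemma coord_le (x : SRVertex m n) (i : Fin m) : x.1 i ≤ n := by
  have h1 : x.1 i ≤ ∑ t, x.1 t :=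
    Finset.single_le_sum (fun _ _ => Nat.zero_le _) (Finset.mem_univ i)
  have h2 := x.2
  omega

lemma rest_sum (x : SRVertex m n) (i : Fin m) :
    ∑ t ∈ Finset.univ.erase i, x.1 t = n - x.1 i := by
  have h := Finset.add_sum_erase Finset.univ x.1 (Finset.mem_univ i)
  have h2 := x.2
  omega

lemma update_mem (x : SRVertex m n) (i : Fin m) {k : ℕ} (hk : k ≤ x.1 i) :
    Function.update x.1 i (x.1 i - k) ∈ Finset.Nat.antidiagonalTuple m (n - k) := by
  rw [Finset.Nat.mem_antidiagonalTuple, Finset.sum_update_of_mem (Finset.mem_univ i)]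
  have h1 : ∑ t ∈ Finset.univ \ {i}, x.1 t = n - x.1 i := by
    rw [← rest_sum x i]
    congr 1
    ext t; simp [Finset.mem_erase, Finset.mem_sdiff, and_comm]
  rw [h1]
  have := coord_le x i
  omega

lemma sum_diag (x : SRVertex m n) :
    ∑ p ∈ S m n, cvec m n p.1 p.2 x * cvec m n p.1 p.2 x = (n : ℝ) := by
  rw [S, Finset.sum_sigma]
  have step1 : ∀ k ∈ Finset.Icc 1 n,
      (∑ w ∈ Finset.Nat.antidiagonalTuple m (n - k),
        cvec m n k w x * cvec m n k w x) = ∑ i, if k ≤ x.1 i then (1:ℝ) else 0 := by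
    intro k hk
    obtain ⟨hk1, hk2⟩ := Finset.mem_Icc.mp hk
    calc (∑ w ∈ Finset.Nat.antidiagonalTuple m (n - k),
          cvec m n k w x * cvec m n k w x)
        = ∑ w ∈ Finset.Nat.antidiagonalTuple m (n - k),
            ∑ i, if covAt k w x.1 i then (1:ℝ) else 0 := by
          refine Finset.sum_congr rfl fun w _ => ?_
          have h0 : cvec m n k w x * cvec m n k w x
              = if ∃ i, covAt k w x.1 i then (1:ℝ) else 0 := by
            unfold cvec; split_ifs <;> ring
          rw [h0]
          exact ind_exists fun i j hi hj => hi.i_eq hk1 hj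
      _ = ∑ i, ∑ w ∈ Finset.Nat.antidiagonalTuple m (n - k),
            if covAt k w x.1 i then (1:ℝ) else 0 := Finset.sum_comm
      _ = ∑ i, if k ≤ x.1 i then (1:ℝ) else 0 := by
          refine Finset.sum_congr rfl fun i _ => ?_
          simp_rw [covAt_iff]
          by_cases hki : k ≤ x.1 i
          · simp only [hki, true_and]
            rw [Finset.sum_ite_eq' (Finset.Nat.antidiagonalTuple m (n - k))
               (Function.update x.1 i (x.1 i - k)) (fun _ => (1:ℝ))]
            simp [update_mem x i hki, hki]
          · simp [hki]
  rw [Finset.sum_congr rfl step1, Finset.sum_comm]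
  have step2 : ∀ i : Fin m,
      (∑ k ∈ Finset.Icc 1 n, if k ≤ x.1 i then (1:ℝ) else 0) = (x.1 i : ℝ) := by
    intro i
    rw [Finset.sum_boole]
    have hfil : (Finset.Icc 1 n).filter (fun k => k ≤ x.1 i) = Finset.Icc 1 (x.1 i) := by
      have := coord_le x i
      ext k
      simp only [Finset.mem_filter, Finset.mem_Icc]
      omega
    rw [hfil, Nat.card_Icc]
    simp
  rw [Finset.sum_congr rfl fun i _ => step2 i, ← Nat.cast_sum, x.2]

lemma sum_offdiag (x y : SRVertex m n) (hxy : x ≠ y) :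
    ∑ p ∈ S m n, cvec m n p.1 p.2 x * cvec m n p.1 p.2 y
      = if (SR m n).Adj x y then (1:ℝ) else 0 := by
  have hprod : ∀ (k : ℕ) (w : Fin m → ℕ),
      cvec m n k w x * cvec m n k w y
        = if (∃ i, covAt k w x.1 i) ∧ (∃ j, covAt k w y.1 j) then (1:ℝ) else 0 := by
    intro k w
    unfold cvec
    by_cases h1 : ∃ i, covAt k w x.1 i <;> by_cases h2 : ∃ j, covAt k w y.1 j <;>
      simp [h1, h2]
  have pairfacts : ∀ (k : ℕ), 1 ≤ k → ∀ (w : Fin m → ℕ) (i j : Fin m),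
      covAt k w x.1 i → covAt k w y.1 j →
      i ≠ j ∧ x.1 i = y.1 i + k ∧ y.1 j = x.1 j + k ∧
        (∀ t, t ≠ i → t ≠ j → x.1 t = y.1 t) := by
    intro k hk w i j hi hj
    have hij : i ≠ j := by
      rintro rfl
      exact hxy (Subtype.ext (hi.trans hj.symm))
    exact ⟨hij,
      by rw [hi.apply_self, hj.apply_ne hij],
      by rw [hj.apply_self, hi.apply_ne hij.symm],
      fun t hti htj => by rw [hi.apply_ne hti, hj.apply_ne htj]⟩
  by_cases hadj : (SR m n).Adj x y
  · rw [if_pos hadj]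
    -- extract the two coordinates where x and y differ
    obtain ⟨a, b, hab, hfil⟩ := Finset.card_eq_two.mp hadj
    have hmem : ∀ t : Fin m, x.1 t ≠ y.1 t ↔ (t = a ∨ t = b) := by
      intro t
      constructor
      · intro ht
        have : t ∈ ({a, b} : Finset (Fin m)) := by
          rw [← hfil]; exact Finset.mem_filter.mpr ⟨Finset.mem_univ _, ht⟩
        simpa using this
      · intro ht
        have : t ∈ ({a, b} : Finset (Fin m)) := by simpa using ht
        rw [← hfil] at this
        exact (Finset.mem_filter.mp this).2
    have hxa : x.1 a ≠ y.1 a := (hmem a).mpr (Or.inl rfl)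
    have hxb : x.1 b ≠ y.1 b := (hmem b).mpr (Or.inr rfl)
    have hoff : ∀ t, t ≠ a → t ≠ b → x.1 t = y.1 t := by
      intro t hta htb
      by_contra hc
      rcases (hmem t).mp hc with h | h <;> [exact hta h; exact htb h]
    have hsum2 : x.1 a + x.1 b = y.1 a + y.1 b := by
      have h1 : x.1 a + ∑ t ∈ Finset.univ.erase a, x.1 t = n :=
        by rw [Finset.add_sum_erase Finset.univ x.1 (Finset.mem_univ a), x.2]
      have h2 : y.1 a + ∑ t ∈ Finset.univ.erase a, y.1 t = n :=
        by rw [Finset.add_sum_erase Finset.univ y.1 (Finset.mem_univ a), y.2]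
      have hb' : b ∈ Finset.univ.erase a := Finset.mem_erase.mpr ⟨Ne.symm hab, Finset.mem_univ b⟩
      have h3 : x.1 b + ∑ t ∈ (Finset.univ.erase a).erase b, x.1 t
          = ∑ t ∈ Finset.univ.erase a, x.1 t :=
        Finset.add_sum_erase _ x.1 hb'
      have h4 : y.1 b + ∑ t ∈ (Finset.univ.erase a).erase b, y.1 t
          = ∑ t ∈ Finset.univ.erase a, y.1 t :=
        Finset.add_sum_erase _ y.1 hb'
      have h5 : ∑ t ∈ (Finset.univ.erase a).erase b, x.1 t
          = ∑ t ∈ (Finset.univ.erase a).erase b, y.1 t := by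
        refine Finset.sum_congr rfl fun t ht => ?_
        obtain ⟨htb, hta⟩ : t ≠ b ∧ t ≠ a := by
          simpa [Finset.mem_erase] using ht
        exact hoff t hta htb
      omega
    -- canonical pair with x bigger at i₀
    obtain ⟨i₀, j₀, hne, hlt, hs2, hoff'⟩ :
        ∃ i₀ j₀ : Fin m, i₀ ≠ j₀ ∧ y.1 i₀ < x.1 i₀ ∧
          x.1 i₀ + x.1 j₀ = y.1 i₀ + y.1 j₀ ∧
          (∀ t, t ≠ i₀ → t ≠ j₀ → x.1 t = y.1 t) := by
      rcases Nat.lt_or_ge (y.1 a) (x.1 a) with h | h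
      · exact ⟨a, b, hab, h, hsum2, hoff⟩
      · have hay : x.1 a < y.1 a := by omega
        exact ⟨b, a, Ne.symm hab, by omega, by omega, fun t h1 h2 => hoff t h2 h1⟩
    obtain ⟨k₀, hk₀⟩ : ∃ k, k = x.1 i₀ - y.1 i₀ := ⟨_, rfl⟩
    obtain ⟨w₀, hw₀⟩ : ∃ w, w = Function.update x.1 i₀ (y.1 i₀) := ⟨_, rfl⟩
    have hxle : x.1 i₀ ≤ n := coord_le x i₀
    have hpos1 : 1 ≤ k₀ := by omega
    have hx0 : covAt k₀ w₀ x.1 i₀ := by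
      rw [covAt_iff]
      refine ⟨by omega, ?_⟩
      rw [hw₀, show x.1 i₀ - k₀ = y.1 i₀ by omega]
    have hy0 : covAt k₀ w₀ y.1 j₀ := by
      unfold covAt
      funext t
      by_cases h1 : t = j₀
      · subst h1
        rw [if_pos rfl, hw₀, Function.update_of_ne (Ne.symm hne)]
        omega
      · rw [if_neg h1, add_zero, hw₀, Function.update_apply]
        by_cases h2 : t = i₀
        · subst h2
          rw [if_pos rfl]
        · rw [if_neg h2]
          exact (hoff' t h2 h1).symm
    have hp₀ : (⟨k₀, w₀⟩ : Σ _ : ℕ, Fin m → ℕ) ∈ S m n := by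
      rw [S, Finset.mem_sigma]
      constructor
      · show k₀ ∈ Finset.Icc 1 n
        rw [Finset.mem_Icc]
        clear * - hlt hk₀ hxle
        omega
      · show w₀ ∈ Finset.Nat.antidiagonalTuple m (n - k₀)
        rw [hw₀, show y.1 i₀ = x.1 i₀ - k₀ by clear * - hlt hk₀; omega]
        exact update_mem x i₀ (by clear * - hk₀; omega)
    rw [Finset.sum_eq_single_of_mem ⟨k₀, w₀⟩ hp₀]
    · rw [hprod, if_pos ⟨⟨i₀, hx0⟩, ⟨j₀, hy0⟩⟩]
    · rintro ⟨k, w⟩ hq hqne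
      show cvec m n k w x * cvec m n k w y = 0
      rw [hprod]
      refine if_neg ?_
      rintro ⟨⟨i, hi⟩, ⟨j, hj⟩⟩
      have hk1 : 1 ≤ k := (Finset.mem_Icc.mp (Finset.mem_sigma.mp hq).1).1
      obtain ⟨hij, hxi, hyj, hrest⟩ := pairfacts k hk1 w i j hi hj
      have hii : i = i₀ := by
        by_contra hii
        rcases eq_or_ne i j₀ with rfl | hij0
        · clear * - hk1 hlt hs2 hxi
          omega
        · have h9 := hoff' i hii hij0
          clear * - hk1 hxi h9
          omega
      have hjj : j = j₀ := by
        by_contra hjj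
        rcases eq_or_ne j i₀ with rfl | hji0
        · exact hij (hii.trans rfl)
        · have h9 := hoff' j hji0 hjj
          clear * - hk1 hyj h9
          omega
      apply hqne
      have hkk : k = k₀ := by
        rw [hii] at hxi
        clear * - hxi hk₀ hlt
        omega
      have hww : w = w₀ := by
        obtain ⟨hle, hwe⟩ := covAt_iff.mp hi
        rw [hwe, hii, hkk, hw₀, show x.1 i₀ - k₀ = y.1 i₀ by omega]
      subst hkk
      exact congrArg _ hww
  · rw [if_neg hadj]
    refine Finset.sum_eq_zero fun p hp => ?_
    rw [hprod]
    refine if_neg ?_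
    rintro ⟨⟨i, hi⟩, ⟨j, hj⟩⟩
    have hk1 : 1 ≤ p.1 := (Finset.mem_Icc.mp (Finset.mem_sigma.mp hp).1).1
    obtain ⟨hij, hxi, hyj, hrest⟩ := pairfacts p.1 hk1 p.2 i j hi hj
    apply hadj
    show (Finset.univ.filter fun t => x.1 t ≠ y.1 t).card = 2
    have : (Finset.univ.filter fun t => x.1 t ≠ y.1 t) = {i, j} := by
      ext t
      simp only [Finset.mem_filter, Finset.mem_univ, true_and, Finset.mem_insert,
        Finset.mem_singleton]
      constructor
      · intro ht
        by_contra hc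
        push_neg at hc
        exact ht (hrest t hc.1 hc.2)
      · rintro (rfl | rfl) <;> omega
    rw [this, Finset.card_pair hij]

end SRPSD

lemma psd_vecMulVec {ι : Type*} [Fintype ι] (v : ι → ℝ) :
    (Matrix.vecMulVec v v).PosSemidef := by
  rw [Matrix.posSemidef_iff_dotProduct_mulVec]
  constructor
  · ext i j
    simp [Matrix.conjTranspose_apply, Matrix.vecMulVec_apply, mul_comm]
  · intro z
    have h : Matrix.vecMulVec v v *ᵥ z = fun i => v i * ∑ j, v j * z j := by
      funext i
      simp [Matrix.mulVec, dotProduct, Matrix.vecMulVec_apply, Finset.mul_sum, mul_assoc]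
    rw [h]
    have h2 : star z ⬝ᵥ (fun i => v i * ∑ j, v j * z j)
        = (∑ j, v j * z j) * (∑ j, v j * z j) := by
      simp only [dotProduct, Pi.star_apply, star_trivial, ← mul_assoc]
      rw [← Finset.sum_mul]
      congr 1
      exact Finset.sum_congr rfl fun i _ => mul_comm _ _
    rw [h2]
    exact mul_self_nonneg _

/-- `A + n·I` is positive semidefinite, where `A` is the adjacency matrix of `SR(m,n)`. -/
theorem SR_adjMatrix_add_smul_one_posSemidef (m n : ℕ) :
    ((SR m n).adjMatrix ℝ + (n : ℝ) • 1).PosSemidef := by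
  classical
  have hmat : (SR m n).adjMatrix ℝ + (n : ℝ) • 1
      = ∑ p ∈ SRPSD.S m n,
          Matrix.vecMulVec (SRPSD.cvec m n p.1 p.2) (SRPSD.cvec m n p.1 p.2) := by
    ext x y
    rw [Matrix.sum_apply]
    simp only [Matrix.vecMulVec_apply]
    by_cases hxy : x = y
    · subst hxy
      rw [SRPSD.sum_diag x]
      simp [Matrix.one_apply, (SR m n).irrefl]
    · rw [SRPSD.sum_offdiag x y hxy]
      simp [Matrix.one_apply, hxy]
  rw [hmat]
  refine Finset.sum_induction _ _ (fun a b ha hb => ha.add hb) ?_ fun p _ => psd_vecMulVec _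
  exact Matrix.PosSemidef.zero
end

section
/- Let m ≥ 1. The dimension of the eigenspace {v | A v = −C(m,2)·v} of the adjacency matrix A of SR(m,n) for the eigenvalue −C(m,2) equals the binomial coefficient C(n − C(m−1,2), m−1), where this binomial coefficient is interpreted as 0 when n < C(m−1,2). -/
open Matrix Polynomial

namespace SRAux

open MvPolynomial Finset

noncomputable section

variable {m n : ℕ}

def ee {m : ℕ} (x : Fin m → ℕ) : Fin m →₀ ℕ := Finsupp.equivFunOnFinite.symm x

lemma ee_apply (x : Fin m → ℕ) (k : Fin m) : ee x k = x k := rfl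

lemma ee_inj : Function.Injective (ee (m := m)) := Finsupp.equivFunOnFinite.symm.injective

lemma ee_degree (x : Fin m → ℕ) : (ee x).degree = ∑ i, x i :=
  Finset.sum_subset (Finset.subset_univ _)
    (fun i _ hi => Finsupp.notMem_support_iff.mp hi)

lemma coeff_monomial' (u s : Fin m →₀ ℕ) (a : ℝ) :
    MvPolynomial.coeff u (monomial s a) = if s = u then a else 0 :=
  MvPolynomial.coeff_monomial u s a

def Phi (m n : ℕ) : (SRVertex m n → ℝ) →ₗ[ℝ] MvPolynomial (Fin m) ℝ where
  toFun v := ∑ x : SRVertex m n, monomial (ee x.1) (v x)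
  map_add' v w := by simp [Finset.sum_add_distrib]
  map_smul' c v := by simp [Finset.smul_sum, MvPolynomial.smul_monomial]

lemma coeff_Phi (v : SRVertex m n → ℝ) (x : SRVertex m n) :
    MvPolynomial.coeff (ee x.1) (Phi m n v) = v x := by
  classical
  simp only [Phi, LinearMap.coe_mk, AddHom.coe_mk, MvPolynomial.coeff_sum, coeff_monomial']
  rw [Finset.sum_eq_single x]
  · simp
  · intro y _ hyx
    rw [if_neg]
    exact fun h => hyx (Subtype.ext (ee_inj h))
  · simp

lemma Phi_isHomogeneous (v : SRVertex m n → ℝ) : (Phi m n v).IsHomogeneous n := by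
  apply MvPolynomial.IsHomogeneous.sum
  intro x _
  exact isHomogeneous_monomial _ ((ee_degree x.1).trans x.2)

lemma Phi_inj : Function.Injective (Phi m n) := by
  intro v w h
  funext x
  rw [← coeff_Phi v x, ← coeff_Phi w x, h]

lemma ee_equivFun (u : Fin m →₀ ℕ) : ee (Finsupp.equivFunOnFinite u) = u :=
  Finsupp.equivFunOnFinite.symm_apply_apply u

lemma Phi_reconstruct {F : MvPolynomial (Fin m) ℝ} (hF : F.IsHomogeneous n) :
    Phi m n (fun x => MvPolynomial.coeff (ee x.1) F) = F := by
  classical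
  ext u
  simp only [Phi, LinearMap.coe_mk, AddHom.coe_mk, MvPolynomial.coeff_sum, coeff_monomial']
  have hdeg : u.degree = ∑ i, (Finsupp.equivFunOnFinite u) i := by
    conv_lhs => rw [← ee_equivFun u]
    exact ee_degree _
  by_cases hu : ∑ i, (Finsupp.equivFunOnFinite u) i = n
  · rw [Finset.sum_eq_single (⟨Finsupp.equivFunOnFinite u, hu⟩ : SRVertex m n)]
    · rw [if_pos (ee_equivFun u), ee_equivFun u]
    · intro y _ hyx
      rw [if_neg]
      intro h
      exact hyx (Subtype.ext (ee_inj (h.trans (ee_equivFun u).symm)))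
    · simp
  · rw [Finset.sum_eq_zero, eq_comm]
    · exact hF.coeff_eq_zero (by rw [hdeg]; exact hu)
    · intro y _
      rw [if_neg]
      intro h
      apply hu
      rw [← hdeg, ← h, ee_degree, y.2]

/-! ### Substitution -/

def sb {m : ℕ} (i j : Fin m) : Fin m → MvPolynomial (Fin m) ℝ :=
  fun k => if k = i then X j else X k

def rc {m : ℕ} (i j : Fin m) (x : Fin m → ℕ) : Fin m → ℕ :=
  fun k => if k = i then 0 else if k = j then x i + x j else x k

lemma aeval_sb_monomial {i j : Fin m} (hij : i ≠ j) (u : Fin m → ℕ) (c : ℝ) :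
    MvPolynomial.aeval (sb i j) (monomial (ee u) c) = monomial (ee (rc i j u)) c := by
  rw [MvPolynomial.aeval_monomial, MvPolynomial.monomial_eq]
  rw [Finsupp.prod_fintype _ _ (fun k => pow_zero _),
      Finsupp.prod_fintype _ _ (fun k => pow_zero _)]
  have hj : j ∈ (univ : Finset (Fin m)).erase i := by simp [hij.symm]
  have heq : ∀ (g : Fin m → MvPolynomial (Fin m) ℝ),
      ∏ k, g k = g i * (g j * ∏ k ∈ (univ.erase i).erase j, g k) := by
    intro g
    rw [← Finset.mul_prod_erase univ g (mem_univ i), ← Finset.mul_prod_erase (univ.erase i) g hj]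
  rw [heq, heq]
  simp only [ee_apply, MvPolynomial.algebraMap_eq]
  have hP : ∏ k ∈ (univ.erase i).erase j, (sb i j k) ^ (u k)
      = ∏ k ∈ (univ.erase i).erase j, (X k : MvPolynomial (Fin m) ℝ) ^ (rc i j u k) := by
    apply Finset.prod_congr rfl
    intro k hk
    have hkj : k ≠ j := (Finset.mem_erase.mp hk).1
    have hki : k ≠ i := (Finset.mem_erase.mp (Finset.mem_erase.mp hk).2).1
    simp [sb, rc, hki, hkj]
  have hsbi : sb i j i = X j := by simp [sb]
  have hsbj : sb i j j = X j := by simp [sb, hij.symm]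
  have hrci : rc i j u i = 0 := by simp [rc]
  have hrcj : rc i j u j = u i + u j := by simp [rc, hij.symm]
  rw [hsbi, hsbj, hrci, hrcj, hP, pow_zero, one_mul, pow_add]
  ring

lemma aeval_sb_Phi {i j : Fin m} (hij : i ≠ j) (v : SRVertex m n → ℝ) :
    MvPolynomial.aeval (sb i j) (Phi m n v)
      = ∑ x : SRVertex m n, monomial (ee (rc i j x.1)) (v x) := by
  have : Phi m n v = ∑ x : SRVertex m n, monomial (ee x.1) (v x) := rfl
  rw [this, map_sum]
  exact Finset.sum_congr rfl fun x _ => aeval_sb_monomial hij x.1 (v x)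

lemma sum_fib_eq_coeff (i j : Fin m) (v : SRVertex m n → ℝ) (x : SRVertex m n) :
    MvPolynomial.coeff (ee (rc i j x.1))
        (∑ y : SRVertex m n, monomial (ee (rc i j y.1)) (v y))
      = ∑ y ∈ univ.filter (fun y : SRVertex m n => rc i j y.1 = rc i j x.1), v y := by
  classical
  simp only [MvPolynomial.coeff_sum, coeff_monomial', Finset.sum_filter]
  exact Finset.sum_congr rfl fun y _ =>
    if_congr ⟨fun h => ee_inj h, fun h => congrArg ee h⟩ rfl rfl

lemma aeval_sb_Phi_eq_zero_iff {i j : Fin m} (hij : i ≠ j) (v : SRVertex m n → ℝ) :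
    MvPolynomial.aeval (sb i j) (Phi m n v) = 0
      ↔ ∀ x : SRVertex m n,
          ∑ y ∈ univ.filter (fun y : SRVertex m n => rc i j y.1 = rc i j x.1), v y = 0 := by
  classical
  rw [aeval_sb_Phi hij]
  constructor
  · intro h x
    rw [← sum_fib_eq_coeff, h, MvPolynomial.coeff_zero]
  · intro h
    ext u
    rw [MvPolynomial.coeff_zero]
    by_cases hx : ∃ x : SRVertex m n, ee (rc i j x.1) = u
    · obtain ⟨x, hx⟩ := hx
      rw [← hx, sum_fib_eq_coeff]
      exact h x
    · simp only [MvPolynomial.coeff_sum, coeff_monomial']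
      apply Finset.sum_eq_zero
      intro y _
      rw [if_neg (fun h' => hx ⟨y, h'⟩)]

/-! ### Divisibility -/

lemma dvd_sub_aeval (i j : Fin m) (F : MvPolynomial (Fin m) ℝ) :
    (X i - X j) ∣ (F - MvPolynomial.aeval (sb i j) F) := by
  induction F using MvPolynomial.induction_on with
  | C a => simp [MvPolynomial.algebraMap_eq]
  | add p q hp hq =>
    have h : p + q - MvPolynomial.aeval (sb i j) (p + q)
        = (p - MvPolynomial.aeval (sb i j) p) + (q - MvPolynomial.aeval (sb i j) q) := by
      rw [map_add]; ring
    rw [h]; exact dvd_add hp hq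
  | mul_X p k hp =>
    rw [_root_.map_mul, MvPolynomial.aeval_X]
    have h : p * X k - MvPolynomial.aeval (sb i j) p * sb i j k
        = (p - MvPolynomial.aeval (sb i j) p) * X k
          + MvPolynomial.aeval (sb i j) p * (X k - sb i j k) := by ring
    rw [h]
    refine dvd_add (hp.mul_right _) (Dvd.dvd.mul_left ?_ _)
    by_cases hk : k = i
    · subst hk; simp [sb]
    · simp [sb, hk]

lemma aeval_sb_X_sub_X {i j : Fin m} (hij : i ≠ j) :
    MvPolynomial.aeval (sb i j) (X i - X j : MvPolynomial (Fin m) ℝ) = 0 := by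
  rw [map_sub, MvPolynomial.aeval_X, MvPolynomial.aeval_X]
  simp [sb, hij.symm]

lemma dvd_iff_aeval {i j : Fin m} (hij : i ≠ j) (F : MvPolynomial (Fin m) ℝ) :
    (X i - X j) ∣ F ↔ MvPolynomial.aeval (sb i j) F = 0 := by
  constructor
  · rintro ⟨G, rfl⟩
    rw [_root_.map_mul, aeval_sb_X_sub_X hij, zero_mul]
  · intro h
    have := dvd_sub_aeval i j F
    rwa [h, sub_zero] at this

lemma X_sub_X_ne_zero {i j : Fin m} (hij : i ≠ j) :
    (X i - X j : MvPolynomial (Fin m) ℝ) ≠ 0 :=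
  sub_ne_zero.mpr fun h => hij (MvPolynomial.X_injective h)

lemma prime_X_sub_X {i j : Fin m} (hij : i ≠ j) :
    Prime (X i - X j : MvPolynomial (Fin m) ℝ) := by
  refine ⟨X_sub_X_ne_zero hij, ?_, ?_⟩
  · intro hu
    have h1 : (X i - X j : MvPolynomial (Fin m) ℝ) ∣ 1 := hu.dvd
    rw [dvd_iff_aeval hij, _root_.map_one] at h1
    exact one_ne_zero h1
  · intro a b hab
    rw [dvd_iff_aeval hij, _root_.map_mul] at hab
    rcases mul_eq_zero.mp hab with h | h
    · exact Or.inl ((dvd_iff_aeval hij a).mpr h)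
    · exact Or.inr ((dvd_iff_aeval hij b).mpr h)

lemma prod_X_sub_X_dvd (F : MvPolynomial (Fin m) ℝ) (s : Finset (Fin m × Fin m))
    (hs : ∀ p ∈ s, p.1 < p.2) (hd : ∀ p ∈ s, (X p.1 - X p.2 : MvPolynomial (Fin m) ℝ) ∣ F) :
    (∏ p ∈ s, (X p.1 - X p.2 : MvPolynomial (Fin m) ℝ)) ∣ F := by
  classical
  revert hs hd
  induction s using Finset.induction_on with
  | empty => intro _ _; simpa using one_dvd F
  | @insert q s' hqs ih =>
    intro hs hd
    have hq2 : q.1 < q.2 := hs q (Finset.mem_insert_self _ _)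
    have hqne : q.1 ≠ q.2 := ne_of_lt hq2
    obtain ⟨G, hG⟩ := ih (fun p hp => hs p (Finset.mem_insert_of_mem hp))
      (fun p hp => hd p (Finset.mem_insert_of_mem hp))
    have hfq : (X q.1 - X q.2 : MvPolynomial (Fin m) ℝ) ∣ F :=
      hd q (Finset.mem_insert_self _ _)
    have hnd : ¬ (X q.1 - X q.2 : MvPolynomial (Fin m) ℝ)
        ∣ ∏ p ∈ s', (X p.1 - X p.2 : MvPolynomial (Fin m) ℝ) := by
      intro hdvd
      obtain ⟨p, hp, hdp⟩ := (prime_X_sub_X hqne).exists_mem_finset_dvd hdvd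
      have hp2 : p.1 < p.2 := hs p (Finset.mem_insert_of_mem hp)
      have hpq : p ≠ q := fun h => hqs (h ▸ hp)
      have hz : MvPolynomial.aeval (sb q.1 q.2) (X p.1 - X p.2 : MvPolynomial (Fin m) ℝ) = 0 := by
        obtain ⟨H, hH⟩ := hdp
        rw [hH, _root_.map_mul, aeval_sb_X_sub_X hqne, zero_mul]
      rw [map_sub, MvPolynomial.aeval_X, MvPolynomial.aeval_X] at hz
      simp only [sb] at hz
      split_ifs at hz with h1 h2 h2
      · rw [sub_self] at hz
        exact absurd (h1.trans h2.symm) (ne_of_lt hp2)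
      · have := MvPolynomial.X_injective (sub_eq_zero.mp hz)
        exact hpq (Prod.ext h1 this.symm)
      · have := MvPolynomial.X_injective (sub_eq_zero.mp hz)
        exact absurd ((this ▸ hq2).trans (h2 ▸ hp2)) (lt_irrefl _)
      · have := MvPolynomial.X_injective (sub_eq_zero.mp hz)
        exact absurd (this ▸ hp2) (lt_irrefl _)
    rcases (prime_X_sub_X hqne).2.2 _ _ (hG ▸ hfq) with h | h
    · exact absurd h hnd
    · obtain ⟨H, hH⟩ := h
      refine ⟨H, ?_⟩
      rw [Finset.prod_insert hqs, hG, hH]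
      ring

/-! ### Pairs and Vandermonde -/

def pairs (m : ℕ) : Finset (Fin m × Fin m) := univ.filter (fun p => p.1 < p.2)

lemma mem_pairs {p : Fin m × Fin m} : p ∈ pairs m ↔ p.1 < p.2 := by simp [pairs]

lemma card_pairs (m : ℕ) : (pairs m).card = Nat.choose m 2 := by
  rw [Finset.card_eq_sum_card_fiberwise (f := Prod.snd) (t := univ) (fun p _ => mem_univ _)]
  have hfib : ∀ j : Fin m, ((pairs m).filter fun p => p.2 = j).card = (j : ℕ) := by
    intro j
    have hmap : (pairs m).filter (fun p => p.2 = j)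
        = (Finset.Iio j).map ⟨fun i => (i, j), fun a b h => (Prod.mk.injEq _ _ _ _ ▸ h).1⟩ := by
      ext p
      simp only [Finset.mem_filter, mem_pairs, Finset.mem_map, Finset.mem_Iio,
        Function.Embedding.coeFn_mk]
      constructor
      · rintro ⟨h1, h2⟩
        exact ⟨p.1, h2 ▸ h1, by rw [← h2]; rfl⟩
      · rintro ⟨i, hi, rfl⟩
        exact ⟨hi, rfl⟩
    rw [hmap, Finset.card_map, Fin.card_Iio]
  rw [Finset.sum_congr rfl (fun j _ => hfib j), Fin.sum_univ_eq_sum_range (fun i => i) m]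
  have h2 := Finset.sum_range_id_mul_two m
  have h3 := Nat.choose_two_right m
  omega

def Van (m : ℕ) : MvPolynomial (Fin m) ℝ :=
  ∏ p ∈ pairs m, (X p.1 - X p.2 : MvPolynomial (Fin m) ℝ)

lemma Van_isHomogeneous (m : ℕ) : (Van m).IsHomogeneous (Nat.choose m 2) := by
  have := MvPolynomial.IsHomogeneous.prod (pairs m)
    (fun p => (X p.1 - X p.2 : MvPolynomial (Fin m) ℝ)) (fun _ => 1)
    (fun p _ => (isHomogeneous_X _ _).sub (isHomogeneous_X _ _))
  simpa [Van, card_pairs] using this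

lemma Van_ne_zero (m : ℕ) : Van m ≠ 0 :=
  Finset.prod_ne_zero_iff.mpr fun p hp => X_sub_X_ne_zero (ne_of_lt (mem_pairs.mp hp))

/-! ### rc fibers and coordinates -/

lemma sum_split {i j : Fin m} (hij : i ≠ j) (f : Fin m → ℕ) :
    ∑ k, f k = f i + (f j + ∑ k ∈ (univ.erase i).erase j, f k) := by
  have hj : j ∈ (univ : Finset (Fin m)).erase i := by simp [hij.symm]
  rw [← Finset.add_sum_erase univ f (mem_univ i), ← Finset.add_sum_erase (univ.erase i) f hj]

lemma rc_eq_iff {i j : Fin m} (hij : i ≠ j) (x y : SRVertex m n) :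
    rc i j y.1 = rc i j x.1 ↔ ∀ k, k ≠ i → k ≠ j → y.1 k = x.1 k := by
  constructor
  · intro h k hki hkj
    have := congrFun h k
    simpa [rc, hki, hkj] using this
  · intro h
    have hsum : y.1 i + y.1 j = x.1 i + x.1 j := by
      have hy := y.2; have hx := x.2
      rw [sum_split hij] at hy hx
      have : ∑ k ∈ (univ.erase i).erase j, y.1 k = ∑ k ∈ (univ.erase i).erase j, x.1 k := by
        apply Finset.sum_congr rfl
        intro k hk
        exact h k (Finset.mem_erase.mp (Finset.mem_erase.mp hk).2).1 (Finset.mem_erase.mp hk).1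
      omega
    funext k
    by_cases hki : k = i
    · simp [rc, hki]
    by_cases hkj : k = j
    · subst hkj
      simp only [rc, if_neg hki, if_pos rfl, if_neg (fun h : k = i => hki h)]
      simpa [rc, hki, hij.symm] using hsum
    · simp [rc, hki, hkj, h k hki hkj]

lemma diff_card_ne_one (x y : SRVertex m n) :
    ((univ : Finset (Fin m)).filter fun k => x.1 k ≠ y.1 k).card ≠ 1 := by
  intro hcard
  obtain ⟨a, ha⟩ := Finset.card_eq_one.mp hcard
  have hoff : ∀ k, k ≠ a → x.1 k = y.1 k := by
    intro k hk
    by_contra hne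
    have : k ∈ (univ : Finset (Fin m)).filter fun k => x.1 k ≠ y.1 k :=
      Finset.mem_filter.mpr ⟨mem_univ k, hne⟩
    rw [ha, Finset.mem_singleton] at this
    exact hk this
  have haa : x.1 a ≠ y.1 a := by
    have : a ∈ (univ : Finset (Fin m)).filter fun k => x.1 k ≠ y.1 k := by
      rw [ha]; exact Finset.mem_singleton_self a
    exact (Finset.mem_filter.mp this).2
  apply haa
  have hx := x.2; have hy := y.2
  rw [← Finset.add_sum_erase univ x.1 (mem_univ a)] at hx
  rw [← Finset.add_sum_erase univ y.1 (mem_univ a)] at hy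
  have : ∑ k ∈ univ.erase a, x.1 k = ∑ k ∈ univ.erase a, y.1 k :=
    Finset.sum_congr rfl fun k hk => hoff k (Finset.mem_erase.mp hk).1
  omega

/-! ### Counting -/

lemma filter_eq_single {a b : Fin m} (hab : a < b) (x y : SRVertex m n)
    (hD : ((univ : Finset (Fin m)).filter fun k => x.1 k ≠ y.1 k) = {a, b}) :
    ((pairs m).filter (fun p => rc p.1 p.2 y.1 = rc p.1 p.2 x.1)) = {(a, b)} := by
  classical
  ext p
  simp only [Finset.mem_filter, mem_pairs, Finset.mem_singleton]
  constructor
  · rintro ⟨h12, hrc⟩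
    have hoff := (rc_eq_iff (ne_of_lt h12) x y).mp hrc
    have hmem : ∀ k ∈ ({a, b} : Finset (Fin m)), k = p.1 ∨ k = p.2 := by
      intro k hk
      rw [← hD] at hk
      have hk' := (Finset.mem_filter.mp hk).2
      by_contra hcon
      push_neg at hcon
      exact hk' ((hoff k hcon.1 hcon.2).symm)
    have ha := hmem a (by simp)
    have hb := hmem b (by simp)
    rcases ha with ha | ha <;> rcases hb with hb | hb
    · exact absurd (ha.trans hb.symm) (ne_of_lt hab)
    · exact Prod.ext ha.symm hb.symm
    · rw [ha, hb] at hab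
      exact absurd (lt_trans h12 hab) (lt_irrefl _)
    · exact absurd (ha.trans hb.symm) (ne_of_lt hab)
  · rintro rfl
    refine ⟨hab, (rc_eq_iff (ne_of_lt hab) x y).mpr ?_⟩
    intro k hk1 hk2
    by_contra hne
    have hk : k ∈ ({a, b} : Finset (Fin m)) :=
      hD ▸ Finset.mem_filter.mpr ⟨mem_univ k, fun h => hne h.symm⟩
    simp only [Finset.mem_insert, Finset.mem_singleton] at hk
    tauto


lemma count_pairs (x y : SRVertex m n) :
    (((pairs m)).filter (fun p => rc p.1 p.2 y.1 = rc p.1 p.2 x.1)).card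
      = if y = x then Nat.choose m 2 else if (SR m n).Adj x y then 1 else 0 := by
  classical
  by_cases hyx : y = x
  · subst hyx
    rw [if_pos rfl, ← card_pairs m]
    congr 1
    apply Finset.filter_true_of_mem
    intro p _
    rfl
  · rw [if_neg hyx]
    by_cases hadj : (SR m n).Adj x y
    · rw [if_pos hadj]
      obtain ⟨a, b, hab, hD⟩ := Finset.card_eq_two.mp hadj
      rcases lt_or_gt_of_ne hab with hlt | hlt
      · rw [filter_eq_single hlt x y hD]
        exact Finset.card_singleton _
      · rw [Finset.pair_comm a b] at hD
        rw [filter_eq_single hlt x y hD]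
        exact Finset.card_singleton _
    · rw [if_neg hadj]
      rw [Finset.card_eq_zero]
      apply Finset.filter_false_of_mem
      intro p hp
      have hp12 : p.1 < p.2 := mem_pairs.mp hp
      intro hrc
      have hoff := (rc_eq_iff (ne_of_lt hp12) x y).mp hrc
      have hsub : ((univ : Finset (Fin m)).filter fun k => x.1 k ≠ y.1 k) ⊆ {p.1, p.2} := by
        intro k hk
        have hk' := (Finset.mem_filter.mp hk).2
        simp only [Finset.mem_insert, Finset.mem_singleton]
        by_contra hcon
        push_neg at hcon
        exact hk' ((hoff k hcon.1 hcon.2).symm)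
      have hle : ((univ : Finset (Fin m)).filter fun k => x.1 k ≠ y.1 k).card ≤ 2 :=
        le_trans (Finset.card_le_card hsub)
          (le_trans (Finset.card_insert_le _ _) (by simp))
      have hne0 : ((univ : Finset (Fin m)).filter fun k => x.1 k ≠ y.1 k).card ≠ 0 := by
        intro h0
        apply hyx
        apply Subtype.ext; funext k
        by_contra hne
        have : k ∈ (univ : Finset (Fin m)).filter fun k => x.1 k ≠ y.1 k :=
          Finset.mem_filter.mpr ⟨mem_univ k, fun h => hne h.symm⟩
        rw [Finset.card_eq_zero.mp h0] at this
        exact absurd this (Finset.notMem_empty k)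
      have hne1 := diff_card_ne_one x y
      have : ((univ : Finset (Fin m)).filter fun k => x.1 k ≠ y.1 k).card = 2 := by omega
      exact hadj this

lemma counting (v : SRVertex m n → ℝ) (x : SRVertex m n) :
    ∑ p ∈ pairs m,
        ∑ y ∈ univ.filter (fun y : SRVertex m n => rc p.1 p.2 y.1 = rc p.1 p.2 x.1), v y
      = (∑ y ∈ (SR m n).neighborFinset x, v y) + (Nat.choose m 2 : ℝ) * v x := by
  classical
  simp only [Finset.sum_filter]
  rw [Finset.sum_comm]
  have hterm : ∀ y : SRVertex m n,
      (∑ p ∈ pairs m, if rc p.1 p.2 y.1 = rc p.1 p.2 x.1 then v y else 0)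
        = ((((pairs m)).filter fun p => rc p.1 p.2 y.1 = rc p.1 p.2 x.1).card : ℝ) * v y := by
    intro y
    rw [← Finset.sum_filter, Finset.sum_const, nsmul_eq_mul]
  rw [Finset.sum_congr rfl (fun y _ => hterm y)]
  have hsplit : ∀ y : SRVertex m n,
      ((((pairs m)).filter fun p => rc p.1 p.2 y.1 = rc p.1 p.2 x.1).card : ℝ) * v y
        = (if y = x then (Nat.choose m 2 : ℝ) * v y else 0)
          + (if (SR m n).Adj x y then v y else 0) := by
    intro y
    rw [count_pairs x y]
    by_cases h1 : y = x
    · subst h1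
      rw [if_pos rfl, if_pos rfl, if_neg ((SR m n).irrefl), add_zero]
    · rw [if_neg h1, if_neg h1]
      by_cases h2 : (SR m n).Adj x y
      · rw [if_pos h2, if_pos h2, zero_add]
        norm_num
      · rw [if_neg h2, if_neg h2]
        norm_num
  rw [Finset.sum_congr rfl (fun y _ => hsplit y), Finset.sum_add_distrib]
  rw [Finset.sum_ite_eq' univ x (fun y => (Nat.choose m 2 : ℝ) * v y)]
  rw [SimpleGraph.neighborFinset_eq_filter, Finset.sum_filter]
  simp [add_comm]

lemma mem_eigen_iff (v : SRVertex m n → ℝ) :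
    Matrix.toLin' ((SR m n).adjMatrix ℝ) v = (-(Nat.choose m 2 : ℝ)) • v
      ↔ ∀ p ∈ pairs m, ∀ x : SRVertex m n,
          ∑ y ∈ univ.filter (fun y : SRVertex m n => rc p.1 p.2 y.1 = rc p.1 p.2 x.1), v y
            = 0 := by
  classical
  rw [Matrix.toLin'_apply]
  constructor
  · intro h p hp x
    -- each x gives total over pairs equal zero
    have hx : ∀ x : SRVertex m n,
        ∑ q ∈ pairs m,
          ∑ y ∈ univ.filter (fun y : SRVertex m n => rc q.1 q.2 y.1 = rc q.1 q.2 x.1), v y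
          = 0 := by
      intro x
      have hpt := congrFun h x
      rw [SimpleGraph.adjMatrix_mulVec_apply] at hpt
      have : (-(Nat.choose m 2 : ℝ) • v) x = -(Nat.choose m 2 : ℝ) * v x := rfl
      rw [counting v x, hpt, this]
      ring
    -- sum of squares
    set g := fun q : Fin m × Fin m => fun y : SRVertex m n => rc q.1 q.2 y.1 with hg
    have hsq : ∀ q : Fin m × Fin m,
        ∑ x : SRVertex m n, v x *
            (∑ y ∈ univ.filter (fun y : SRVertex m n => g q y = g q x), v y)
          = ∑ u ∈ univ.image (g q),
              (∑ y ∈ univ.filter (fun y : SRVertex m n => g q y = u), v y) ^ 2 := by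
      intro q
      rw [← Finset.sum_fiberwise_of_maps_to
        (g := g q) (fun x (_ : x ∈ univ) => Finset.mem_image_of_mem (g q) (mem_univ x))
        (f := fun x => v x * (∑ y ∈ univ.filter (fun y : SRVertex m n => g q y = g q x), v y))]
      apply Finset.sum_congr rfl
      intro u _
      have hcong : ∀ x ∈ univ.filter (fun x : SRVertex m n => g q x = u),
          v x * (∑ y ∈ univ.filter (fun y : SRVertex m n => g q y = g q x), v y)
            = v x * (∑ y ∈ univ.filter (fun y : SRVertex m n => g q y = u), v y) := by
        intro x hx
        rw [(Finset.mem_filter.mp hx).2]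
      rw [Finset.sum_congr rfl hcong, ← Finset.sum_mul, sq]
    have htot : ∑ q ∈ pairs m, ∑ u ∈ univ.image (g q),
        (∑ y ∈ univ.filter (fun y : SRVertex m n => g q y = u), v y) ^ 2 = 0 := by
      rw [Finset.sum_congr rfl (fun q _ => (hsq q).symm)]
      rw [Finset.sum_comm]
      rw [Finset.sum_congr rfl (fun x (_ : x ∈ univ) => (Finset.mul_sum _ _ _).symm)]
      rw [Finset.sum_congr rfl (fun x (_ : x ∈ univ) => by rw [hx x, mul_zero])]
      exact Finset.sum_const_zero
    have hqz : ∀ q ∈ pairs m, ∀ u ∈ univ.image (g q),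
        (∑ y ∈ univ.filter (fun y : SRVertex m n => g q y = u), v y) = 0 := by
      intro q hq u hu
      have h1 : ∀ q ∈ pairs m, (0:ℝ) ≤ ∑ u ∈ univ.image (g q),
          (∑ y ∈ univ.filter (fun y : SRVertex m n => g q y = u), v y) ^ 2 :=
        fun q _ => Finset.sum_nonneg fun u _ => sq_nonneg _
      have h2 := (Finset.sum_eq_zero_iff_of_nonneg h1).mp htot q hq
      have h3 := (Finset.sum_eq_zero_iff_of_nonneg (fun u _ => sq_nonneg _)).mp h2 u hu
      exact (pow_eq_zero_iff two_ne_zero).mp h3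
    exact hqz p hp (g p x) (Finset.mem_image_of_mem (g p) (mem_univ x))
  · intro h
    funext x
    rw [SimpleGraph.adjMatrix_mulVec_apply]
    have hc := counting v x
    rw [Finset.sum_congr rfl (fun p hp => h p hp x), Finset.sum_const_zero] at hc
    have : (-(Nat.choose m 2 : ℝ) • v) x = -(Nat.choose m 2 : ℝ) * v x := rfl
    rw [this]
    linarith

/-! ### Homogeneous factorization -/

lemma hom_factor {c : ℕ} {D F G : MvPolynomial (Fin m) ℝ} (hD : D.IsHomogeneous c)
    (hF : F.IsHomogeneous n) (h : F = D * G) :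
    (c ≤ n → F = D * MvPolynomial.homogeneousComponent (n - c) G) ∧ (n < c → F = 0) := by
  classical
  have hFC : MvPolynomial.homogeneousComponent n F = F := by
    rw [MvPolynomial.homogeneousComponent_of_mem
      ((MvPolynomial.mem_homogeneousSubmodule _ _).mpr hF), if_pos rfl]
  have hsum : F = ∑ k ∈ Finset.range (G.totalDegree + 1),
      D * MvPolynomial.homogeneousComponent k G := by
    rw [← Finset.mul_sum, MvPolynomial.sum_homogeneousComponent, h]
  have hcomp : F = ∑ k ∈ Finset.range (G.totalDegree + 1),
      (if n = c + k then D * MvPolynomial.homogeneousComponent k G else 0) := by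
    conv_lhs => rw [← hFC, hsum]
    rw [map_sum]
    apply Finset.sum_congr rfl
    intro k _
    rw [MvPolynomial.homogeneousComponent_of_mem
      ((MvPolynomial.mem_homogeneousSubmodule _ _).mpr
        (hD.mul (MvPolynomial.homogeneousComponent_isHomogeneous k G)))]
  constructor
  · intro hcn
    rw [hcomp, Finset.sum_congr rfl
      (fun k _ => if_congr (by omega : (n = c + k) ↔ (k = n - c)) rfl rfl),
      Finset.sum_ite_eq' (Finset.range (G.totalDegree + 1)) (n - c)
        (fun k => D * MvPolynomial.homogeneousComponent k G)]
    by_cases hin : n - c ∈ Finset.range (G.totalDegree + 1)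
    · rw [if_pos hin]
    · rw [if_neg hin]
      rw [MvPolynomial.homogeneousComponent_eq_zero _ G
        (by simp only [Finset.mem_range] at hin; omega), mul_zero]
  · intro hnc
    rw [hcomp, Finset.sum_eq_zero]
    intro k _
    rw [if_neg (by omega)]

lemma eigen_iff_dvd (v : SRVertex m n → ℝ) :
    Matrix.toLin' ((SR m n).adjMatrix ℝ) v = (-(Nat.choose m 2 : ℝ)) • v
      ↔ Van m ∣ Phi m n v := by
  rw [mem_eigen_iff]
  constructor
  · intro h
    apply prod_X_sub_X_dvd _ _ (fun p hp => mem_pairs.mp hp)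
    intro p hp
    have hne : p.1 ≠ p.2 := ne_of_lt (mem_pairs.mp hp)
    rw [dvd_iff_aeval hne, aeval_sb_Phi_eq_zero_iff hne]
    exact h p hp
  · intro h p hp x
    have hne : p.1 ≠ p.2 := ne_of_lt (mem_pairs.mp hp)
    have hd : (X p.1 - X p.2 : MvPolynomial (Fin m) ℝ) ∣ Phi m n v :=
      dvd_trans (Finset.dvd_prod_of_mem (fun p : Fin m × Fin m => (X p.1 - X p.2 : MvPolynomial (Fin m) ℝ)) hp) h
    rw [dvd_iff_aeval hne, aeval_sb_Phi_eq_zero_iff hne] at hd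
    exact hd x

/-! ### The parametrizing linear map -/

def Tmap (m n : ℕ) : (SRVertex m (n - Nat.choose m 2) → ℝ) →ₗ[ℝ] (SRVertex m n → ℝ) where
  toFun w := fun x => MvPolynomial.coeff (ee x.1) (Van m * Phi m (n - Nat.choose m 2) w)
  map_add' w w' := by
    funext x
    show MvPolynomial.coeff (ee x.1) (Van m * Phi m (n - Nat.choose m 2) (w + w')) = _
    rw [_root_.map_add, mul_add, MvPolynomial.coeff_add]
    rfl
  map_smul' c w := by
    funext x
    show MvPolynomial.coeff (ee x.1) (Van m * Phi m (n - Nat.choose m 2) (c • w)) = _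
    rw [_root_.map_smul, Algebra.mul_smul_comm, MvPolynomial.coeff_smul]
    rfl

lemma Phi_Tmap (hC : Nat.choose m 2 ≤ n) (w : SRVertex m (n - Nat.choose m 2) → ℝ) :
    Phi m n (Tmap m n w) = Van m * Phi m (n - Nat.choose m 2) w := by
  have hhom : (Van m * Phi m (n - Nat.choose m 2) w).IsHomogeneous n := by
    have := (Van_isHomogeneous m).mul (Phi_isHomogeneous w)
    rwa [Nat.add_sub_cancel' hC] at this
  exact Phi_reconstruct hhom

lemma Tmap_inj (hC : Nat.choose m 2 ≤ n) : Function.Injective (Tmap m n) := by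
  intro w w' h
  apply Phi_inj
  have h2 : Phi m n (Tmap m n w) = Phi m n (Tmap m n w') := by rw [h]
  rw [Phi_Tmap hC, Phi_Tmap hC] at h2
  exact mul_left_cancel₀ (Van_ne_zero m) h2

lemma range_Tmap (hC : Nat.choose m 2 ≤ n) :
    LinearMap.range (Tmap m n)
      = Module.End.eigenspace (Matrix.toLin' ((SR m n).adjMatrix ℝ))
          (-(Nat.choose m 2 : ℝ)) := by
  ext v
  rw [LinearMap.mem_range, Module.End.mem_eigenspace_iff]
  constructor
  · rintro ⟨w, rfl⟩
    rw [eigen_iff_dvd, Phi_Tmap hC]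
    exact Dvd.intro _ rfl
  · intro hv
    rw [eigen_iff_dvd] at hv
    obtain ⟨G, hG⟩ := hv
    have hfac := (hom_factor (Van_isHomogeneous m) (Phi_isHomogeneous v) hG).1 hC
    refine ⟨fun x => MvPolynomial.coeff (ee x.1)
      (MvPolynomial.homogeneousComponent (n - Nat.choose m 2) G), ?_⟩
    apply Phi_inj
    rw [Phi_Tmap hC,
      Phi_reconstruct (MvPolynomial.homogeneousComponent_isHomogeneous (n - Nat.choose m 2) G)]
    exact hfac.symm

lemma card_SRVertex (m d : ℕ) (hm : 1 ≤ m) :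
    Fintype.card (SRVertex m d) = Nat.choose (d + m - 1) (m - 1) := by
  rw [Fintype.card_congr (Sym.equivNatSumOfFintype (Fin m) d).symm]
  rw [Sym.card_sym_eq_choose, Fintype.card_fin]
  rw [show m + d - 1 = d + m - 1 by omega]
  rw [← Nat.choose_symm (by omega : d ≤ d + m - 1), show d + m - 1 - d = m - 1 by omega]

lemma choose_rec (m : ℕ) (hm : 1 ≤ m) :
    Nat.choose m 2 = Nat.choose (m - 1) 2 + (m - 1) := by
  obtain ⟨k, rfl⟩ : ∃ k, m = k + 1 := ⟨m - 1, by omega⟩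
  rw [Nat.choose_succ_succ k 1, Nat.choose_one_right]
  simp [Nat.add_comm]

end
end SRAux

/-- The multiplicity of the eigenvalue `-choose m 2` of the adjacency matrix of `SR(m,n)`
equals `choose (n - choose (m-1) 2) (m-1)` (which is `0` when `n < choose (m-1) 2`,
by truncated natural subtraction). -/
theorem SR_mult_smallest (m n : ℕ) (hm : 1 ≤ m) :
    Module.finrank ℝ
        (Module.End.eigenspace (Matrix.toLin' ((SR m n).adjMatrix ℝ))
          (-(Nat.choose m 2 : ℝ)))
      = Nat.choose (n - Nat.choose (m - 1) 2) (m - 1) := by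
  classical
  have hrec := SRAux.choose_rec m hm
  by_cases hC : Nat.choose m 2 ≤ n
  · rw [← SRAux.range_Tmap hC, LinearMap.finrank_range_of_inj (SRAux.Tmap_inj hC),
      Module.finrank_pi ℝ, SRAux.card_SRVertex m _ hm]
    congr 1
    omega
  · push_neg at hC
    have hbot : Module.End.eigenspace (Matrix.toLin' ((SR m n).adjMatrix ℝ))
        (-(Nat.choose m 2 : ℝ)) = ⊥ := by
      rw [Submodule.eq_bot_iff]
      intro v hv
      rw [Module.End.mem_eigenspace_iff, SRAux.eigen_iff_dvd] at hv
      obtain ⟨G, hG⟩ := hv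
      have hz := (SRAux.hom_factor (SRAux.Van_isHomogeneous m)
        (SRAux.Phi_isHomogeneous v) hG).2 hC
      exact SRAux.Phi_inj (by rw [hz, map_zero])
    rw [hbot, finrank_bot]
    have hm2 : 2 ≤ m := by
      by_contra h
      have hm1 : m = 1 := by omega
      subst hm1
      simp [Nat.choose] at hC
    symm
    exact Nat.choose_eq_zero_of_lt (by omega)
end

section
/- Let n ≥ 1 and let x be a vertex of SR(m,n) with exactly i nonzero coordinates (so 1 ≤ i ≤ min(m,n)). Then: (a) the number of neighbors of x having exactly i−1 nonzero coordinates equals i(i−1); (b) the number of neighbors of x having exactly i+1 nonzero coordinates equals (n−i)(m−i); (c) every other neighbor of x has exactly i nonzero coordinates. Moreover, the number of vertices of SR(m,n) with exactly i nonzero coordinates equals C(m,i)·C(n−1,i−1). -/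
open Matrix Polynomial

open Finset

namespace SRAux

variable {m : ℕ}

/-- The modified vector: set coordinate `a` to `v` and coordinate `b` to `x a + x b - v`. -/
def N (x : Fin m → ℕ) (a b : Fin m) (v : ℕ) : Fin m → ℕ :=
  Function.update (Function.update x a v) b (x a + x b - v)

theorem N_apply_b (x : Fin m → ℕ) (a b : Fin m) (v : ℕ) : N x a b v b = x a + x b - v := by
  simp [N]

theorem N_apply_a (x : Fin m → ℕ) {a b : Fin m} (hab : a ≠ b) (v : ℕ) : N x a b v a = v := by
  simp [N, Function.update_of_ne hab]

theorem N_apply (x : Fin m → ℕ) {a b j : Fin m} (hja : j ≠ a) (hjb : j ≠ b) (v : ℕ) :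
    N x a b v j = x j := by
  simp [N, Function.update_of_ne hjb, Function.update_of_ne hja]

theorem split_sum {M : Type*} [AddCommMonoid M] {a b : Fin m} (hab : a ≠ b) (g : Fin m → M) :
    ∑ j, g j = g a + (g b + ∑ j ∈ (univ.erase a).erase b, g j) := by
  rw [Finset.add_sum_erase _ g (Finset.mem_erase.2 ⟨hab.symm, mem_univ b⟩),
    Finset.add_sum_erase _ g (mem_univ a)]

theorem sum_N {x : Fin m → ℕ} {a b : Fin m} (hab : a ≠ b) {v : ℕ} (hv : v ≤ x a) :
    ∑ j, N x a b v j = ∑ j, x j := by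
  rw [split_sum hab (N x a b v), split_sum hab x, N_apply_a x hab, N_apply_b]
  have h : ∑ j ∈ (univ.erase a).erase b, N x a b v j = ∑ j ∈ (univ.erase a).erase b, x j :=
    Finset.sum_congr rfl fun j hj => by
      simp only [mem_erase] at hj
      exact N_apply x hj.2.1 hj.1 v
  rw [h]
  omega

theorem card_filter_split (p : Fin m → Prop) [DecidablePred p] {a b : Fin m} (hab : a ≠ b) :
    (univ.filter p).card
      = (if p a then 1 else 0) + ((if p b then 1 else 0)
          + ∑ j ∈ (univ.erase a).erase b, if p j then 1 else 0) := by
  rw [Finset.card_filter, split_sum hab]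

theorem supp_N {x : Fin m → ℕ} {a b : Fin m} (hab : a ≠ b) {v : ℕ} (hv : v < x a) :
    (univ.filter fun j => N x a b v j ≠ 0).card + (if x b = 0 then 0 else 1)
      = (univ.filter fun j => x j ≠ 0).card + (if v = 0 then 0 else 1) := by
  rw [card_filter_split _ hab, card_filter_split (fun j => x j ≠ 0) hab]
  have hS : (∑ j ∈ (univ.erase a).erase b, if N x a b v j ≠ 0 then 1 else 0)
      = ∑ j ∈ (univ.erase a).erase b, if x j ≠ 0 then 1 else 0 :=
    Finset.sum_congr rfl fun j hj => by
      simp only [mem_erase] at hj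
      rw [N_apply x hj.2.1 hj.1]
  rw [hS, N_apply_a x hab, N_apply_b]
  split_ifs <;> omega

theorem filter_ne_N {x : Fin m → ℕ} {a b : Fin m} (hab : a ≠ b) {v : ℕ} (hv : v < x a) :
    (univ.filter fun j => x j ≠ N x a b v j) = {a, b} := by
  ext j
  simp only [mem_filter, mem_univ, true_and, mem_insert, mem_singleton]
  constructor
  · intro h
    by_contra hc
    push_neg at hc
    exact h (N_apply x hc.1 hc.2 v).symm
  · rintro (rfl | rfl)
    · rw [N_apply_a x hab]; omega
    · rw [N_apply_b]; omega

/-- The parameter set for neighbors of `x`. -/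
def Tset (n : ℕ) (x : Fin m → ℕ) : Finset (Fin m × Fin m × ℕ) :=
  (univ ×ˢ univ ×ˢ range (n + 1)).filter fun p => p.1 ≠ p.2.1 ∧ p.2.2 < x p.1

theorem mem_Tset {n : ℕ} {x : Fin m → ℕ} {p : Fin m × Fin m × ℕ} :
    p ∈ Tset n x ↔ p.2.2 ≤ n ∧ p.1 ≠ p.2.1 ∧ p.2.2 < x p.1 := by
  simp [Tset, Nat.lt_succ_iff, and_assoc]

theorem mcard_sum {α β : Type*} (s : Finset β) (f : β → Multiset α) :
    Multiset.card (∑ b ∈ s, f b) = ∑ b ∈ s, Multiset.card (f b) :=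
  map_sum (⟨⟨Multiset.card, Multiset.card_zero⟩, Multiset.card_add⟩ : Multiset α →+ ℕ) f s

/-- Stars and bars equiv: functions summing to `k` are multisets of size `k`. -/
def funSym (α : Type*) [Fintype α] [DecidableEq α] (k : ℕ) :
    {f : α → ℕ // ∑ a, f a = k} ≃ Sym α k where
  toFun f := ⟨∑ a, f.1 a • ({a} : Multiset α), by
    rw [mcard_sum]
    simp [f.2]⟩
  invFun s := ⟨fun a => s.1.count a, by
    rw [Multiset.sum_count_eq_card (fun a _ => mem_univ a), s.2]⟩
  left_inv f := Subtype.ext (funext fun a => by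
    simp [Multiset.count_sum', Multiset.count_nsmul, Multiset.count_singleton])
  right_inv s := Subtype.ext (Multiset.ext.2 fun a => by
    simp [Multiset.count_sum', Multiset.count_nsmul, Multiset.count_singleton])

end SRAux

namespace SRAux

open Finset

variable {m n : ℕ}

theorem le_sum (x : SRVertex m n) (a : Fin m) : x.1 a ≤ n := by
  have h1 := Finset.single_le_sum (f := x.1) (fun j _ => Nat.zero_le _) (mem_univ a)
  have h2 := x.2
  omega

theorem mem_nbr {x y : SRVertex m n} :
    y ∈ (SR m n).neighborFinset x ↔ (univ.filter fun j => x.1 j ≠ y.1 j).card = 2 := by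
  rw [SimpleGraph.mem_neighborFinset]
  rfl

theorem Nvert_sum (x : SRVertex m n) {p : Fin m × Fin m × ℕ} (hp : p ∈ Tset n x.1) :
    ∑ j, N x.1 p.1 p.2.1 p.2.2 j = n := by
  obtain ⟨-, hab, hv⟩ := mem_Tset.1 hp
  rw [sum_N hab hv.le]
  exact x.2

/-- The vertex given by a parameter triple. -/
def Nvert (x : SRVertex m n) (p : Fin m × Fin m × ℕ) (hp : p ∈ Tset n x.1) : SRVertex m n :=
  ⟨N x.1 p.1 p.2.1 p.2.2, Nvert_sum x hp⟩

theorem Nvert_mem_nbr (x : SRVertex m n) (p : Fin m × Fin m × ℕ) (hp : p ∈ Tset n x.1) :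
    Nvert x p hp ∈ (SR m n).neighborFinset x := by
  obtain ⟨-, hab, hv⟩ := mem_Tset.1 hp
  rw [mem_nbr]
  rw [show (Nvert x p hp).1 = N x.1 p.1 p.2.1 p.2.2 from rfl, filter_ne_N hab hv]
  exact card_pair hab

theorem neighbor_param {x y : SRVertex m n} (hy : y ∈ (SR m n).neighborFinset x) :
    ∃ p ∈ Tset n x.1, y.1 = N x.1 p.1 p.2.1 p.2.2 := by
  rw [mem_nbr] at hy
  obtain ⟨a, b, hab, hD⟩ := Finset.card_eq_two.1 hy
  have hmem : ∀ j, x.1 j ≠ y.1 j ↔ (j = a ∨ j = b) := fun j => by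
    constructor
    · intro h
      have hj : j ∈ univ.filter fun j => x.1 j ≠ y.1 j := mem_filter.2 ⟨mem_univ j, h⟩
      rw [hD] at hj
      simpa using hj
    · intro h
      have hj : j ∈ ({a, b} : Finset (Fin m)) := by simpa using h
      rw [← hD] at hj
      exact (mem_filter.1 hj).2
  have hxa : x.1 a ≠ y.1 a := (hmem a).2 (Or.inl rfl)
  have hxb : x.1 b ≠ y.1 b := (hmem b).2 (Or.inr rfl)
  have hoff : ∀ j, j ≠ a → j ≠ b → x.1 j = y.1 j := fun j hja hjb => by
    by_contra h
    rcases (hmem j).1 h with h' | h' <;> tauto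
  have hsum : x.1 a + x.1 b = y.1 a + y.1 b := by
    have hx2 := split_sum hab x.1
    have hy2 := split_sum hab y.1
    have hS : ∑ j ∈ (univ.erase a).erase b, x.1 j = ∑ j ∈ (univ.erase a).erase b, y.1 j :=
      Finset.sum_congr rfl fun j hj => by
        simp only [mem_erase] at hj
        exact hoff j hj.2.1 hj.1
    have h1 := x.2
    have h2 := y.2
    omega
  rcases Nat.lt_trichotomy (y.1 a) (x.1 a) with h | h | h
  · refine ⟨(a, b, y.1 a), mem_Tset.2 ⟨le_sum y a, hab, h⟩, ?_⟩
    show y.1 = N x.1 a b (y.1 a)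
    funext j
    rcases eq_or_ne j a with rfl | hja
    · rw [N_apply_a _ hab]
    rcases eq_or_ne j b with rfl | hjb
    · rw [N_apply_b]; omega
    · rw [N_apply _ hja hjb]; exact (hoff j hja hjb).symm
  · exact absurd h.symm hxa
  · have hb : y.1 b < x.1 b := by omega
    refine ⟨(b, a, y.1 b), mem_Tset.2 ⟨le_sum y b, hab.symm, hb⟩, ?_⟩
    show y.1 = N x.1 b a (y.1 b)
    funext j
    rcases eq_or_ne j b with rfl | hjb
    · rw [N_apply_a _ hab.symm]
    rcases eq_or_ne j a with rfl | hja
    · rw [N_apply_b]; omega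
    · rw [N_apply _ hjb hja]; exact (hoff j hja hjb).symm

theorem card_nbr_filter (x : SRVertex m n) (P : (Fin m → ℕ) → Prop) [DecidablePred P] :
    (((SR m n).neighborFinset x).filter fun y => P y.1).card
      = ((Tset n x.1).filter fun p => P (N x.1 p.1 p.2.1 p.2.2)).card := by
  refine (Finset.card_bij (fun p hp => Nvert x p (mem_filter.1 hp).1) ?_ ?_ ?_).symm
  · intro p hp
    obtain ⟨hpT, hP⟩ := mem_filter.1 hp
    exact mem_filter.2 ⟨Nvert_mem_nbr x p hpT, hP⟩
  · rintro ⟨a, b, v⟩ hp ⟨a', b', v'⟩ hq hpq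
    obtain ⟨-, hab, hv⟩ := mem_Tset.1 (mem_filter.1 hp).1
    obtain ⟨-, hab', hv'⟩ := mem_Tset.1 (mem_filter.1 hq).1
    simp only at hab hv hab' hv'
    have h : ∀ j, N x.1 a b v j = N x.1 a' b' v' j :=
      fun j => congrFun (congrArg Subtype.val hpq) j
    have haa : a = a' := by
      by_contra hne
      have h1 := h a
      rw [N_apply_a _ hab] at h1
      rcases eq_or_ne a b' with rfl | h2
      · rw [N_apply_b] at h1
        omega
      · rw [N_apply _ hne h2] at h1
        omega
    subst haa
    have hvv : v = v' := by
      have h1 := h a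
      rw [N_apply_a _ hab, N_apply_a _ hab'] at h1
      exact h1
    subst hvv
    have hbb : b = b' := by
      by_contra hne
      have h1 := h b
      rw [N_apply_b, N_apply _ (Ne.symm hab) hne] at h1
      omega
    subst hbb
    rfl
  · intro y hy
    obtain ⟨hynbr, hyP⟩ := mem_filter.1 hy
    obtain ⟨p, hp, heq⟩ := neighbor_param hynbr
    have hP : P (N x.1 p.1 p.2.1 p.2.2) := heq ▸ hyP
    exact ⟨p, mem_filter.2 ⟨hp, hP⟩, Subtype.ext heq.symm⟩

end SRAux

namespace SRAux

variable {m n : ℕ}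

/-- Vertices with support exactly `S` correspond to functions on `S` summing to `n - #S`. -/
def fiberEquiv (S : Finset (Fin m)) (hSn : S.card ≤ n) :
    {y : SRVertex m n // Finset.univ.filter (fun j => y.1 j ≠ 0) = S}
      ≃ {f : ↥S → ℕ // ∑ a, f a = n - S.card} where
  toFun y := ⟨fun a => y.1.1 a - 1, by
    have hsupp := y.2
    have hpos : ∀ j ∈ S, y.1.1 j ≠ 0 := fun j hj => by
      rw [← hsupp] at hj
      exact (mem_filter.1 hj).2
    have hzero : ∀ j, j ∉ S → y.1.1 j = 0 := fun j hj => by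
      by_contra h
      exact hj (hsupp ▸ mem_filter.2 ⟨mem_univ j, h⟩)
    have h1 : ∑ j ∈ S, y.1.1 j = n :=
      (Finset.sum_subset (Finset.subset_univ S) fun j _ hj => hzero j hj).trans y.1.2
    have h2 : (∑ a : ↥S, (y.1.1 a - 1)) + S.card = ∑ j ∈ S, y.1.1 j := by
      rw [Finset.sum_coe_sort S (fun j => y.1.1 j - 1), Finset.card_eq_sum_ones S,
        ← Finset.sum_add_distrib]
      exact Finset.sum_congr rfl fun j hj => by
        have := hpos j hj
        omega
    show (∑ a : ↥S, (y.1.1 a - 1)) = n - S.card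
    omega⟩
  invFun f := ⟨⟨fun j => if h : j ∈ S then f.1 ⟨j, h⟩ + 1 else 0, by
      have h1 : (∑ j, if h : j ∈ S then f.1 ⟨j, h⟩ + 1 else 0)
          = ∑ j ∈ S, (if h : j ∈ S then f.1 ⟨j, h⟩ + 1 else 0) :=
        (Finset.sum_subset (Finset.subset_univ S) fun j _ hj => dif_neg hj).symm
      rw [h1, ← Finset.sum_coe_sort S (fun j => if h : j ∈ S then f.1 ⟨j, h⟩ + 1 else 0)]
      have h2 : (∑ a : ↥S, if h : (a : Fin m) ∈ S then f.1 ⟨a, h⟩ + 1 else 0)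
          = ∑ a : ↥S, (f.1 a + 1) :=
        Finset.sum_congr rfl fun a _ => by rw [dif_pos a.2]
      rw [h2, Finset.sum_add_distrib, f.2]
      simp only [Finset.sum_const, Finset.card_univ, Fintype.card_coe, smul_eq_mul, mul_one]
      omega⟩, by
    ext j
    simp only [mem_filter, mem_univ, true_and]
    constructor
    · intro h
      by_contra hj
      rw [dif_neg hj] at h
      exact h rfl
    · intro hj
      rw [dif_pos hj]
      omega⟩
  left_inv y := by
    apply Subtype.ext
    apply Subtype.ext
    funext j
    simp only
    by_cases hj : j ∈ S
    · rw [dif_pos hj]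
      have : y.1.1 j ≠ 0 := by
        have := y.2
        rw [← this] at hj
        exact (mem_filter.1 hj).2
      omega
    · rw [dif_neg hj]
      by_contra h
      exact hj (y.2 ▸ mem_filter.2 ⟨mem_univ j, fun hc => h hc.symm⟩)
  right_inv f := by
    apply Subtype.ext
    funext a
    simp only [dif_pos a.2, Subtype.coe_eta]
    omega

theorem fiber_card (S : Finset (Fin m)) (hSn : S.card ≤ n) :
    (Finset.univ.filter fun y : SRVertex m n =>
        Finset.univ.filter (fun j => y.1 j ≠ 0) = S).card
      = (n - 1).choose (n - S.card) := by
  classical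
  rw [← Fintype.card_subtype,
    Fintype.card_congr ((fiberEquiv S hSn).trans (funSym ↥S (n - S.card))),
    Sym.card_sym_eq_choose, Fintype.card_coe]
  congr 1
  omega

end SRAux
/-- The partition of the vertices of `SR(m,n)` by number of nonzero coordinates is
equitable: a vertex `x` with exactly `i` nonzero coordinates has `i(i-1)` neighbors
with `i-1` nonzero coordinates, `(n-i)(m-i)` neighbors with `i+1` nonzero coordinates,
and all other neighbors have exactly `i` nonzero coordinates; moreover the number of
vertices with exactly `i` nonzero coordinates is `choose m i * choose (n-1) (i-1)`. -/
theorem SR_equitable_partition (m n : ℕ) (hn : 1 ≤ n) (i : ℕ) (x : SRVertex m n)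
    (hx : (Finset.univ.filter fun j => x.1 j ≠ 0).card = i) :
    (((SR m n).neighborFinset x).filter (fun y =>
        (Finset.univ.filter fun j => y.1 j ≠ 0).card = i - 1)).card = i * (i - 1) ∧
    (((SR m n).neighborFinset x).filter (fun y =>
        (Finset.univ.filter fun j => y.1 j ≠ 0).card = i + 1)).card = (n - i) * (m - i) ∧
    (∀ y ∈ (SR m n).neighborFinset x,
        (Finset.univ.filter fun j => y.1 j ≠ 0).card ≠ i - 1 →
        (Finset.univ.filter fun j => y.1 j ≠ 0).card ≠ i + 1 →
        (Finset.univ.filter fun j => y.1 j ≠ 0).card = i) ∧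
    (Finset.univ.filter fun y : SRVertex m n =>
        (Finset.univ.filter fun j => y.1 j ≠ 0).card = i).card
      = Nat.choose m i * Nat.choose (n - 1) (i - 1) := by
  classical
  obtain ⟨j0, hj0⟩ : ∃ j, x.1 j ≠ 0 := by
    by_contra h
    push_neg at h
    have h0 : ∑ j, x.1 j = 0 := Finset.sum_eq_zero fun j _ => h j
    have h2 := x.2
    omega
  have hi1 : 1 ≤ i := by
    rw [← hx]
    exact Finset.card_pos.2 ⟨j0, Finset.mem_filter.2 ⟨Finset.mem_univ j0, hj0⟩⟩
  have hin : i ≤ n := by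
    calc i = ∑ j ∈ Finset.univ.filter (fun j => x.1 j ≠ 0), 1 := by
            rw [← hx, Finset.card_eq_sum_ones]
      _ ≤ ∑ j ∈ Finset.univ.filter (fun j => x.1 j ≠ 0), x.1 j :=
            Finset.sum_le_sum fun j hj => Nat.one_le_iff_ne_zero.2 (Finset.mem_filter.1 hj).2
      _ ≤ ∑ j, x.1 j := Finset.sum_le_sum_of_subset (Finset.filter_subset _ _)
      _ = n := x.2
  refine ⟨?_, ?_, ?_, ?_⟩
  · -- part (a)
    have key : (((SR m n).neighborFinset x).filter (fun y =>
        (Finset.univ.filter fun j => y.1 j ≠ 0).card = i - 1)).card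
        = ((SRAux.Tset n x.1).filter fun p =>
            (Finset.univ.filter fun j => SRAux.N x.1 p.1 p.2.1 p.2.2 j ≠ 0).card = i - 1).card :=
      SRAux.card_nbr_filter x (fun f => (Finset.univ.filter fun j => f j ≠ 0).card = i - 1)
    rw [key]
    have hcong : ((SRAux.Tset n x.1).filter fun p =>
        (Finset.univ.filter fun j => SRAux.N x.1 p.1 p.2.1 p.2.2 j ≠ 0).card = i - 1)
        = (SRAux.Tset n x.1).filter fun p => p.2.2 = 0 ∧ x.1 p.2.1 ≠ 0 := by
      apply Finset.filter_congr
      intro p hp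
      obtain ⟨hvn, hab, hv⟩ := SRAux.mem_Tset.1 hp
      have hs := SRAux.supp_N hab hv
      rw [hx] at hs
      split_ifs at hs <;> constructor <;> intro hgoal <;> omega
    rw [hcong]
    have hoff : ((SRAux.Tset n x.1).filter fun p => p.2.2 = 0 ∧ x.1 p.2.1 ≠ 0).card
        = ((Finset.univ.filter fun j => x.1 j ≠ 0).offDiag).card := by
      apply Finset.card_bij (fun p _ => (p.1, p.2.1))
      · intro p hp
        obtain ⟨hpT, hv0, hb⟩ := Finset.mem_filter.1 hp
        obtain ⟨hvn, hab, hv⟩ := SRAux.mem_Tset.1 hpT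
        exact Finset.mem_offDiag.2 ⟨Finset.mem_filter.2 ⟨Finset.mem_univ _,
          show x.1 p.1 ≠ 0 by omega⟩, Finset.mem_filter.2 ⟨Finset.mem_univ _, hb⟩, hab⟩
      · rintro ⟨a, b, v⟩ hp ⟨a', b', v'⟩ hq h
        obtain ⟨-, hv0, -⟩ := Finset.mem_filter.1 hp
        obtain ⟨-, hv0', -⟩ := Finset.mem_filter.1 hq
        simp only [Prod.mk.injEq] at h hv0 hv0' ⊢
        exact ⟨h.1, h.2, by omega⟩
      · rintro ⟨a, b⟩ hab'
        obtain ⟨ha, hb, hne⟩ := Finset.mem_offDiag.1 hab'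
        have ha' := (Finset.mem_filter.1 ha).2
        have ha'' : x.1 a ≠ 0 := ha'
        refine ⟨(a, b, 0), Finset.mem_filter.2 ⟨SRAux.mem_Tset.2 ⟨Nat.zero_le n, hne,
          show (0:ℕ) < x.1 a from Nat.pos_of_ne_zero ha''⟩,
          rfl, (Finset.mem_filter.1 hb).2⟩, rfl⟩
    rw [hoff, Finset.offDiag_card, hx]
    rcases i with _ | k
    · simp
    · simp only [Nat.add_sub_cancel]
      rw [Nat.mul_succ]
      omega
  · -- part (b)
    have key : (((SR m n).neighborFinset x).filter (fun y =>
        (Finset.univ.filter fun j => y.1 j ≠ 0).card = i + 1)).card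
        = ((SRAux.Tset n x.1).filter fun p =>
            (Finset.univ.filter fun j => SRAux.N x.1 p.1 p.2.1 p.2.2 j ≠ 0).card = i + 1).card :=
      SRAux.card_nbr_filter x (fun f => (Finset.univ.filter fun j => f j ≠ 0).card = i + 1)
    rw [key]
    have hcong : ((SRAux.Tset n x.1).filter fun p =>
        (Finset.univ.filter fun j => SRAux.N x.1 p.1 p.2.1 p.2.2 j ≠ 0).card = i + 1)
        = (SRAux.Tset n x.1).filter fun p => p.2.2 ≠ 0 ∧ x.1 p.2.1 = 0 := by
      apply Finset.filter_congr
      intro p hp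
      obtain ⟨hvn, hab, hv⟩ := SRAux.mem_Tset.1 hp
      have hs := SRAux.supp_N hab hv
      rw [hx] at hs
      split_ifs at hs <;> constructor <;> intro hgoal <;> omega
    rw [hcong]
    have hbij : ((SRAux.Tset n x.1).filter fun p => p.2.2 ≠ 0 ∧ x.1 p.2.1 = 0).card
        = (((Finset.univ ×ˢ Finset.range (n+1)).filter
              fun q : Fin m × ℕ => q.2 ≠ 0 ∧ q.2 < x.1 q.1) ×ˢ
            (Finset.univ.filter fun j => x.1 j = 0)).card := by
      apply Finset.card_bij (fun p _ => ((p.1, p.2.2), p.2.1))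
      · intro p hp
        obtain ⟨hpT, hv0, hb⟩ := Finset.mem_filter.1 hp
        obtain ⟨hvn, hab, hv⟩ := SRAux.mem_Tset.1 hpT
        exact Finset.mem_product.2 ⟨Finset.mem_filter.2
          ⟨Finset.mem_product.2 ⟨Finset.mem_univ _, Finset.mem_range.2 (show p.2.2 < n + 1 by omega)⟩,
            hv0, hv⟩,
          Finset.mem_filter.2 ⟨Finset.mem_univ _, hb⟩⟩
      · rintro ⟨a, b, v⟩ _ ⟨a', b', v'⟩ _ h
        simp only [Prod.mk.injEq] at h ⊢
        exact ⟨h.1.1, h.2, h.1.2⟩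
      · rintro ⟨⟨a, v⟩, b⟩ hq
        obtain ⟨h1, h2⟩ := Finset.mem_product.1 hq
        obtain ⟨h1p, hvne, hvlt⟩ := Finset.mem_filter.1 h1
        have hb := (Finset.mem_filter.1 h2).2
        have hvn : v ≤ n := Nat.lt_succ_iff.1 (Finset.mem_range.1 (Finset.mem_product.1 h1p).2)
        have hab : a ≠ b := fun hc => by rw [hc, hb] at hvlt; omega
        exact ⟨(a, b, v), Finset.mem_filter.2 ⟨SRAux.mem_Tset.2 ⟨hvn, hab, hvlt⟩, hvne, hb⟩, rfl⟩
    rw [hbij, Finset.card_product]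
    have hQ : ((Finset.univ ×ˢ Finset.range (n+1)).filter
        fun q : Fin m × ℕ => q.2 ≠ 0 ∧ q.2 < x.1 q.1).card = n - i := by
      rw [Finset.card_filter, Finset.sum_product]
      have hrow : ∀ a : Fin m, (∑ v ∈ Finset.range (n+1),
          if ((a, v).2 ≠ 0 ∧ (a, v).2 < x.1 (a, v).1) then 1 else 0) = x.1 a - 1 := by
        intro a
        rw [← Finset.card_filter]
        have he : (Finset.range (n+1)).filter
            (fun v => (a, v).2 ≠ 0 ∧ (a, v).2 < x.1 (a, v).1) = Finset.Ico 1 (x.1 a) := by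
          ext v
          have := SRAux.le_sum x a
          simp only [Finset.mem_filter, Finset.mem_range, Finset.mem_Ico, Nat.lt_succ_iff]
          omega
        rw [he, Nat.card_Ico]
      rw [Finset.sum_congr rfl fun a _ => hrow a]
      have h2 : ∑ a, ((x.1 a - 1) + if x.1 a ≠ 0 then 1 else 0) = ∑ a, x.1 a :=
        Finset.sum_congr rfl fun a _ => by split_ifs <;> omega
      rw [Finset.sum_add_distrib, ← Finset.card_filter] at h2
      have h3 := x.2
      omega
    have hZ : (Finset.univ.filter fun j => x.1 j = 0).card = m - i := by
      have h1 := Finset.card_filter_add_card_filter_not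
        (s := (Finset.univ : Finset (Fin m))) (p := fun j => x.1 j ≠ 0)
      have h2 : Finset.univ.filter (fun j => ¬ x.1 j ≠ 0)
          = Finset.univ.filter fun j : Fin m => x.1 j = 0 :=
        Finset.filter_congr fun j _ => not_ne_iff
      rw [h2, hx] at h1
      have hcard : (Finset.univ : Finset (Fin m)).card = m := by simp
      omega
    rw [hQ, hZ]
  · -- part (c)
    intro y hy h1 h2
    obtain ⟨p, hp, heq⟩ := SRAux.neighbor_param hy
    obtain ⟨hvn, hab, hv⟩ := SRAux.mem_Tset.1 hp
    have hs := SRAux.supp_N hab hv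
    rw [hx] at hs
    rw [heq] at h1 h2 ⊢
    split_ifs at hs <;> omega
  · -- part (d)
    have hmap : ∀ y ∈ (Finset.univ.filter fun y : SRVertex m n =>
        (Finset.univ.filter fun j => y.1 j ≠ 0).card = i),
        (Finset.univ.filter fun j => y.1 j ≠ 0) ∈ (Finset.univ : Finset (Fin m)).powersetCard i :=
      fun y hy => Finset.mem_powersetCard.2 ⟨Finset.subset_univ _, (Finset.mem_filter.1 hy).2⟩
    rw [Finset.card_eq_sum_card_fiberwise hmap]
    have hterm : ∀ S ∈ (Finset.univ : Finset (Fin m)).powersetCard i,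
        ((Finset.univ.filter fun y : SRVertex m n =>
            (Finset.univ.filter fun j => y.1 j ≠ 0).card = i).filter
          fun y => (Finset.univ.filter fun j => y.1 j ≠ 0) = S).card
        = (n - 1).choose (i - 1) := by
      intro S hS
      obtain ⟨-, hScard⟩ := Finset.mem_powersetCard.1 hS
      have he : (Finset.univ.filter fun y : SRVertex m n =>
            (Finset.univ.filter fun j => y.1 j ≠ 0).card = i).filter
          (fun y => (Finset.univ.filter fun j => y.1 j ≠ 0) = S)
          = Finset.univ.filter
              fun y : SRVertex m n => (Finset.univ.filter fun j => y.1 j ≠ 0) = S := by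
        rw [Finset.filter_filter]
        apply Finset.filter_congr
        intro y _
        constructor
        · exact fun h => h.2
        · exact fun h => ⟨by rw [h, hScard], h⟩
      rw [he, SRAux.fiber_card S (by omega : S.card ≤ n), hScard,
        show n - i = (n - 1) - (i - 1) by omega,
        Nat.choose_symm (by omega : i - 1 ≤ n - 1)]
    rw [Finset.sum_congr rfl hterm, Finset.sum_const, Finset.card_powersetCard,
      Finset.card_univ, Fintype.card_fin, smul_eq_mul]
end

section
/- Let m, n ≥ 1. For every i with 0 ≤ i ≤ min(m,n)−1, the eigenspace {v | A v = ((n−i)(m−i)−n)·v} of the adjacency matrix A of SR(m,n) has dimension at least C(m,i). Moreover, if n < m, then the eigenspace {v | A v = −n·v} has dimension at least C(m,n) − 1. -/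
open Matrix Polynomial

namespace SRProof
open Finset

variable {m n : ℕ}

lemma coord_le (x : SRVertex m n) (l : Fin m) : x.1 l ≤ n := by
  conv_rhs => rw [← x.2]
  exact Finset.single_le_sum (fun i _ => Nat.zero_le _) (mem_univ _)

/-- move `c` units from coordinate `l` to coordinate `k`; `p = (k, l, c)`. -/
def mv (x : SRVertex m n) (p : Fin m × Fin m × ℕ) : Fin m → ℕ :=
  fun j => if j = p.2.1 then x.1 p.2.1 - p.2.2 else if j = p.1 then x.1 p.1 + p.2.2 else x.1 j

def trips (x : SRVertex m n) : Finset (Fin m × Fin m × ℕ) :=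
  (univ ×ˢ univ ×ˢ range (n+1)).filter fun p => p.1 ≠ p.2.1 ∧ 1 ≤ p.2.2 ∧ p.2.2 ≤ x.1 p.2.1

lemma mem_trips {x : SRVertex m n} {k l : Fin m} {c : ℕ} :
    (k, l, c) ∈ trips x ↔ k ≠ l ∧ 1 ≤ c ∧ c ≤ x.1 l := by
  unfold trips
  simp only [mem_filter, mem_product, mem_univ, true_and, mem_range, and_iff_right_iff_imp]
  rintro ⟨-, h1, h2⟩
  have := coord_le x l
  omega

lemma mv_apply (x : SRVertex m n) (k l : Fin m) (c : ℕ) (j : Fin m) :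
    mv x (k, l, c) j = if j = l then x.1 l - c else if j = k then x.1 k + c else x.1 j := rfl

lemma sum_split (f : Fin m → ℕ) (k l : Fin m) (hkl : k ≠ l) :
    ∑ j, f j = f k + f l + ∑ j ∈ (univ : Finset (Fin m)) \ {k, l}, f j := by
  rw [← Finset.sum_sdiff (Finset.subset_univ ({k, l} : Finset (Fin m))),
    Finset.sum_insert (by simp [hkl]), Finset.sum_singleton]
  omega

lemma mv_sum (x : SRVertex m n) (p : Fin m × Fin m × ℕ) (hp : p ∈ trips x) :
    ∑ j, mv x p j = n := by
  obtain ⟨k, l, c⟩ := p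
  rw [mem_trips] at hp
  obtain ⟨hkl, hc1, hc2⟩ := hp
  rw [sum_split (mv x (k, l, c)) k l hkl]
  have he : ∑ j ∈ (univ : Finset (Fin m)) \ {k, l}, mv x (k, l, c) j
      = ∑ j ∈ (univ : Finset (Fin m)) \ {k, l}, x.1 j := by
    apply Finset.sum_congr rfl
    intro j hj
    simp only [mem_sdiff, mem_univ, true_and, mem_insert, mem_singleton, not_or] at hj
    rw [mv_apply, if_neg hj.2, if_neg hj.1]
  rw [he]
  have hx : x.1 k + x.1 l + ∑ j ∈ (univ : Finset (Fin m)) \ {k, l}, x.1 j = n := by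
    rw [← sum_split x.1 k l hkl]; exact x.2
  rw [mv_apply, if_neg hkl, if_pos rfl, mv_apply, if_pos rfl]
  omega

def mvv (x : SRVertex m n) (p : Fin m × Fin m × ℕ) (hp : p ∈ trips x) : SRVertex m n :=
  ⟨mv x p, mv_sum x p hp⟩

lemma mvv_adj (x : SRVertex m n) (p : Fin m × Fin m × ℕ) (hp : p ∈ trips x) :
    (SR m n).Adj x (mvv x p hp) := by
  obtain ⟨k, l, c⟩ := p
  rw [mem_trips] at hp
  obtain ⟨hkl, hc1, hc2⟩ := hp
  show (Finset.univ.filter fun i => x.1 i ≠ mv x (k,l,c) i).card = 2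
  have hset : (Finset.univ.filter fun i => x.1 i ≠ mv x (k,l,c) i) = {k, l} := by
    ext j
    simp only [mem_filter, mem_univ, true_and, mem_insert, mem_singleton]
    rw [mv_apply]
    rcases eq_or_ne j l with rfl | hjl
    · rw [if_pos rfl]
      constructor
      · intro _; right; rfl
      · intro _; omega
    · rw [if_neg hjl]
      rcases eq_or_ne j k with rfl | hjk
      · rw [if_pos rfl]
        constructor
        · intro _; left; rfl
        · intro _; omega
      · rw [if_neg hjk]
        simp [hjl, hjk]
  rw [hset, Finset.card_insert_of_notMem (by simp [hkl]), Finset.card_singleton]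

lemma mv_lt (x : SRVertex m n) {k l : Fin m} {c : ℕ} (h : (k,l,c) ∈ trips x) :
    mv x (k,l,c) l < x.1 l ∧ mv x (k,l,c) k = x.1 k + c := by
  rw [mem_trips] at h
  constructor
  · rw [mv_apply, if_pos rfl]; omega
  · rw [mv_apply, if_neg h.1, if_pos rfl]

lemma mv_inj (x : SRVertex m n) (p q : Fin m × Fin m × ℕ)
    (hp : p ∈ trips x) (hq : q ∈ trips x) (h : mv x p = mv x q) : p = q := by
  obtain ⟨k, l, c⟩ := p
  obtain ⟨k', l', c'⟩ := q
  have hpl := (mv_lt x hp).1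
  have hpk := (mv_lt x hp).2
  have hql := (mv_lt x hq).1
  have hqk := (mv_lt x hq).2
  rw [mem_trips] at hp hq
  have hll : l = l' := by
    by_contra hne
    have h1 : mv x (k', l', c') l = x.1 l ∨ mv x (k', l', c') l = x.1 l + c' := by
      rw [mv_apply, if_neg hne]
      rcases eq_or_ne l k' with rfl | h2
      · rw [if_pos rfl]; right; rfl
      · rw [if_neg h2]; left; rfl
    rw [← h] at h1
    omega
  subst hll
  have hkk : k = k' := by
    by_contra hne
    have h1 : mv x (k', l, c') k = x.1 k := by
      rw [mv_apply, if_neg hp.1, if_neg hne]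
    rw [← h] at h1
    omega
  subst hkk
  have : c = c' := by
    have h1 := hqk
    rw [← h, hpk] at h1
    omega
  subst this
  rfl

lemma mv_surj (x y : SRVertex m n) (hadj : (SR m n).Adj x y) :
    ∃ p ∈ trips x, mv x p = y.1 := by
  have hcard : (Finset.univ.filter fun i => x.1 i ≠ y.1 i).card = 2 := hadj
  obtain ⟨a, b, hab, hset⟩ := Finset.card_eq_two.mp hcard
  have hmem : ∀ j : Fin m, (x.1 j ≠ y.1 j) ↔ (j = a ∨ j = b) := by
    intro j
    have := Finset.ext_iff.mp hset j
    simpa using this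
  have hxa : x.1 a ≠ y.1 a := (hmem a).mpr (Or.inl rfl)
  have hxb : x.1 b ≠ y.1 b := (hmem b).mpr (Or.inr rfl)
  have hrest : ∀ j, j ≠ a → j ≠ b → x.1 j = y.1 j := by
    intro j hja hjb
    by_contra hne
    rcases (hmem j).mp hne with h | h
    · exact hja h
    · exact hjb h
  have hsum : x.1 a + x.1 b = y.1 a + y.1 b := by
    have hx := sum_split x.1 a b hab
    have hy := sum_split y.1 a b hab
    rw [x.2] at hx
    rw [y.2] at hy
    have he : ∑ j ∈ (univ : Finset (Fin m)) \ {a, b}, x.1 j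
        = ∑ j ∈ (univ : Finset (Fin m)) \ {a, b}, y.1 j := by
      apply Finset.sum_congr rfl
      intro j hj
      simp only [mem_sdiff, mem_univ, true_and, mem_insert, mem_singleton, not_or] at hj
      exact hrest j hj.1 hj.2
    omega
  rcases Nat.lt_or_ge (x.1 a) (y.1 a) with hlt | hge
  · refine ⟨(a, b, y.1 a - x.1 a), ?_, ?_⟩
    · rw [mem_trips]
      exact ⟨hab, by omega, by omega⟩
    · funext j
      rw [mv_apply]
      rcases eq_or_ne j b with rfl | hjb
      · rw [if_pos rfl]; omega
      · rw [if_neg hjb]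
        rcases eq_or_ne j a with rfl | hja
        · rw [if_pos rfl]; omega
        · rw [if_neg hja]; exact hrest j hja hjb
  · have hlt : y.1 a < x.1 a := by omega
    refine ⟨(b, a, x.1 a - y.1 a), ?_, ?_⟩
    · rw [mem_trips]
      exact ⟨hab.symm, by omega, by omega⟩
    · funext j
      rw [mv_apply]
      rcases eq_or_ne j a with rfl | hja
      · rw [if_pos rfl]; omega
      · rw [if_neg hja]
        rcases eq_or_ne j b with rfl | hjb
        · rw [if_pos rfl]; omega
        · rw [if_neg hjb]; exact hrest j hja hjb

lemma sum_neighbors (x : SRVertex m n) (f : SRVertex m n → ℝ) :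
    ∑ y ∈ (SR m n).neighborFinset x, f y
      = ∑ p ∈ (trips x).attach, f (mvv x p.1 p.2) := by
  symm
  apply Finset.sum_bij (i := fun (p : {p // p ∈ trips x}) _ => mvv x p.1 p.2)
  · intro p _
    rw [SimpleGraph.mem_neighborFinset]
    exact mvv_adj x p.1 p.2
  · intro p _ q _ h
    apply Subtype.ext
    exact mv_inj x p.1 q.1 p.2 q.2 (congrArg Subtype.val h)
  · intro y hy
    rw [SimpleGraph.mem_neighborFinset] at hy
    obtain ⟨p, hp, hmv⟩ := mv_surj x y hy
    exact ⟨⟨p, hp⟩, Finset.mem_attach _ _, Subtype.ext hmv⟩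
  · intro p _
    rfl

def eT (m n : ℕ) (T : Finset (Fin m)) : SRVertex m n → ℝ :=
  fun x => if ∀ a ∈ T, 1 ≤ x.1 a then 1 else 0

lemma eT_mvv (T : Finset (Fin m)) (x : SRVertex m n) (k l : Fin m) (c : ℕ)
    (hp : (k, l, c) ∈ trips x) :
    eT m n T (mvv x (k, l, c) hp)
      = if (∀ a ∈ T, a = k ∨ a = l ∨ 1 ≤ x.1 a) ∧ (l ∈ T → c + 1 ≤ x.1 l) then 1 else 0 := by
  have hc := (mem_trips.mp hp)
  have hmv : ∀ a : Fin m, (mvv x (k,l,c) hp).1 a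
      = if a = l then x.1 l - c else if a = k then x.1 k + c else x.1 a := fun a => rfl
  unfold eT
  congr 1
  simp only [eq_iff_iff]
  constructor
  · intro h
    refine ⟨fun a ha => ?_, fun hl => ?_⟩
    · rcases eq_or_ne a k with rfl | hak
      · exact Or.inl rfl
      rcases eq_or_ne a l with rfl | hal
      · exact Or.inr (Or.inl rfl)
      · refine Or.inr (Or.inr ?_)
        have h2 := h a ha
        rw [hmv a, if_neg hal, if_neg hak] at h2
        exact h2
    · have h2 := h l hl
      rw [hmv l, if_pos rfl] at h2
      omega
  · rintro ⟨h1, h2⟩ a ha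
    rw [hmv a]
    rcases eq_or_ne a l with rfl | hal
    · rw [if_pos rfl]
      have := h2 ha
      omega
    · rw [if_neg hal]
      rcases eq_or_ne a k with rfl | hak
      · rw [if_pos rfl]
        omega
      · rw [if_neg hak]
        rcases h1 a ha with h | h | h
        · exact absurd h hak
        · exact absurd h hal
        · exact h

def gcount (x : SRVertex m n) (T : Finset (Fin m)) (k l : Fin m) : ℕ :=
  if ∀ a ∈ T, a = k ∨ a = l ∨ 1 ≤ x.1 a then (if l ∈ T then x.1 l - 1 else x.1 l) else 0

lemma step1 (x : SRVertex m n) (T : Finset (Fin m)) :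
    ∑ y ∈ (SR m n).neighborFinset x, eT m n T y
      = ∑ k, ∑ l, if k ≠ l then (gcount x T k l : ℝ) else 0 := by
  rw [sum_neighbors]
  have h1 : ∑ p ∈ (trips x).attach, eT m n T (mvv x p.1 p.2)
      = ∑ p ∈ trips x, (if (∀ a ∈ T, a = p.1 ∨ a = p.2.1 ∨ 1 ≤ x.1 a)
          ∧ (p.2.1 ∈ T → p.2.2 + 1 ≤ x.1 p.2.1) then (1:ℝ) else 0) := by
    rw [← Finset.sum_attach (trips x) (fun p => (if (∀ a ∈ T, a = p.1 ∨ a = p.2.1 ∨ 1 ≤ x.1 a)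
          ∧ (p.2.1 ∈ T → p.2.2 + 1 ≤ x.1 p.2.1) then (1:ℝ) else 0))]
    apply Finset.sum_congr rfl
    intro p _
    obtain ⟨⟨k, l, c⟩, hp⟩ := p
    exact eT_mvv T x k l c hp
  rw [h1]
  unfold trips
  rw [Finset.sum_filter, Finset.sum_product]
  apply Finset.sum_congr rfl
  intro k _
  rw [Finset.sum_product]
  apply Finset.sum_congr rfl
  intro l _
  rcases eq_or_ne k l with rfl | hkl
  · simp
  · rw [if_pos hkl]
    unfold gcount
    by_cases hP : ∀ a ∈ T, a = k ∨ a = l ∨ 1 ≤ x.1 a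
    · rw [if_pos hP]
      have hcong : ∀ c ∈ range (n+1),
          (if ((k, l, c).1 ≠ (k, l, c).2.1 ∧ 1 ≤ (k, l, c).2.2 ∧ (k, l, c).2.2 ≤ x.1 (k, l, c).2.1)
            then (if (∀ a ∈ T, a = (k, l, c).1 ∨ a = (k, l, c).2.1 ∨ 1 ≤ x.1 a)
              ∧ ((k, l, c).2.1 ∈ T → (k, l, c).2.2 + 1 ≤ x.1 (k, l, c).2.1) then (1:ℝ) else 0)
            else 0)
          = if (1 ≤ c ∧ c ≤ x.1 l ∧ (l ∈ T → c + 1 ≤ x.1 l)) then (1:ℝ) else 0 := by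
        intro c _
        by_cases h1 : 1 ≤ c ∧ c ≤ x.1 l ∧ (l ∈ T → c + 1 ≤ x.1 l)
        · rw [if_pos h1, if_pos ⟨hkl, h1.1, h1.2.1⟩, if_pos ⟨hP, h1.2.2⟩]
        · rw [if_neg h1]
          by_cases h2 : (k ≠ l ∧ 1 ≤ c ∧ c ≤ x.1 l)
          · rw [if_pos h2, if_neg]
            rintro ⟨-, h3⟩
            exact h1 ⟨h2.2.1, h2.2.2, h3⟩
          · rw [if_neg h2]
      rw [Finset.sum_congr rfl hcong]
      have hfilter : Finset.filter (fun c => 1 ≤ c ∧ c ≤ x.1 l ∧ (l ∈ T → c + 1 ≤ x.1 l))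
          (range (n+1)) = Finset.Icc 1 (if l ∈ T then x.1 l - 1 else x.1 l) := by
        ext c
        have := coord_le x l
        by_cases hlT : l ∈ T <;>
          simp only [mem_filter, mem_range, Finset.mem_Icc, hlT, if_true, if_false,
            forall_true_left, true_implies, false_implies, and_true] <;> constructor <;>
          intro h <;> [skip; skip; skip; skip] <;> omega
      rw [← Finset.sum_filter, hfilter]
      rw [Finset.sum_const, Nat.card_Icc]
      by_cases hlT : l ∈ T <;> simp [hlT] <;> push_cast <;> omega
    · rw [if_neg hP]
      rw [Finset.sum_eq_zero]
      · simp
      intro c _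
      by_cases h2 : ((k, l, c).1 ≠ (k, l, c).2.1 ∧ 1 ≤ (k, l, c).2.2 ∧ (k, l, c).2.2 ≤ x.1 (k, l, c).2.1)
      · rw [if_pos h2, if_neg]
        rintro ⟨h3, -⟩
        exact hP h3
      · rw [if_neg h2]

lemma sum_ite_ne (b : Fin m → ℝ) (k : Fin m) :
    ∑ l, (if k ≠ l then b l else 0) = (∑ l, b l) - b k := by
  have h : ∀ l : Fin m, (if k ≠ l then b l else 0) = b l - (if k = l then b l else 0) := by
    intro l
    by_cases h : k = l
    · simp [h]
    · simp [h]
  rw [Finset.sum_congr rfl (fun l _ => h l), Finset.sum_sub_distrib, Finset.sum_ite_eq]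
  simp

lemma sum_b (x : SRVertex m n) (T : Finset (Fin m)) :
    ∑ l, ((x.1 l : ℝ) - if l ∈ T then 1 else 0) = (n : ℝ) - T.card := by
  rw [Finset.sum_sub_distrib]
  congr 1
  · rw [← Nat.cast_sum, x.2]
  · rw [Finset.sum_boole]
    congr 1
    simp

lemma key_pointwise (T : Finset (Fin m)) (x : SRVertex m n) :
    ∑ k, ∑ l, (if k ≠ l then (gcount x T k l : ℝ) else 0)
      = (((n:ℝ) - T.card) * ((m:ℝ) - T.card) - (n:ℝ)) * eT m n T x
        + ((n:ℝ) - T.card + 1) * ∑ a ∈ T, eT m n (T.erase a) x := by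
  classical
  set Z := T.filter (fun a => x.1 a = 0) with hZ
  have hmemZ : ∀ a, a ∈ Z ↔ a ∈ T ∧ x.1 a = 0 := by
    intro a; rw [hZ, Finset.mem_filter]
  rcases Nat.lt_or_ge Z.card 2 with hz2 | hz2
  · rcases Nat.lt_or_ge Z.card 1 with hz1 | hz1
    · -- case Z = ∅
      have hZe : Z = ∅ := Finset.card_eq_zero.mp (by omega)
      have hx1 : ∀ a ∈ T, 1 ≤ x.1 a := by
        intro a ha
        by_contra hcon
        have : a ∈ Z := (hmemZ a).mpr ⟨ha, by omega⟩
        rw [hZe] at this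
        exact absurd this (Finset.notMem_empty a)
      have hg : ∀ k l : Fin m, (gcount x T k l : ℝ)
          = (x.1 l : ℝ) - if l ∈ T then 1 else 0 := by
        intro k l
        unfold gcount
        rw [if_pos (fun a ha => Or.inr (Or.inr (hx1 a ha)))]
        by_cases hlT : l ∈ T
        · rw [if_pos hlT, if_pos hlT]
          have := hx1 l hlT
          rw [Nat.cast_sub this, Nat.cast_one]
        · rw [if_neg hlT, if_neg hlT, sub_zero]
      have hsum : ∀ k : Fin m, ∑ l, (if k ≠ l then (gcount x T k l : ℝ) else 0)
          = ((n:ℝ) - T.card) - ((x.1 k : ℝ) - if k ∈ T then 1 else 0) := by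
        intro k
        calc ∑ l, (if k ≠ l then (gcount x T k l : ℝ) else 0)
            = ∑ l, (if k ≠ l then ((x.1 l : ℝ) - if l ∈ T then 1 else 0) else 0) := by
              apply Finset.sum_congr rfl
              intro l _
              by_cases h : k ≠ l
              · rw [if_pos h, if_pos h, hg]
              · rw [if_neg h, if_neg h]
          _ = _ := by rw [sum_ite_ne, sum_b]
      rw [Finset.sum_congr rfl (fun k _ => hsum k), Finset.sum_sub_distrib,
        Finset.sum_const, sum_b, card_univ, Fintype.card_fin]
      have heT : eT m n T x = 1 := if_pos hx1
      have herase : ∀ a ∈ T, eT m n (T.erase a) x = 1 := by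
        intro a _
        exact if_pos (fun b hb => hx1 b (Finset.mem_of_mem_erase hb))
      rw [heT, Finset.sum_congr rfl herase, Finset.sum_const, nsmul_eq_mul, nsmul_eq_mul]
      ring
    · -- case Z = {a₀}
      obtain ⟨a0, hZa0⟩ := Finset.card_eq_one.mp (by omega : Z.card = 1)
      have ha0T : a0 ∈ T := ((hmemZ a0).mp (hZa0 ▸ Finset.mem_singleton_self a0)).1
      have ha0x : x.1 a0 = 0 := ((hmemZ a0).mp (hZa0 ▸ Finset.mem_singleton_self a0)).2
      have hx1 : ∀ a ∈ T, a ≠ a0 → 1 ≤ x.1 a := by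
        intro a ha hne
        by_contra hcon
        have : a ∈ Z := (hmemZ a).mpr ⟨ha, by omega⟩
        rw [hZa0, Finset.mem_singleton] at this
        exact hne this
      have hP : ∀ k l : Fin m, (∀ a ∈ T, a = k ∨ a = l ∨ 1 ≤ x.1 a) ↔ (a0 = k ∨ a0 = l) := by
        intro k l
        constructor
        · intro h
          rcases h a0 ha0T with h | h | h
          · exact Or.inl h
          · exact Or.inr h
          · omega
        · intro h a ha
          rcases eq_or_ne a a0 with rfl | hne
          · rcases h with h | h
            · exact Or.inl h
            · exact Or.inr (Or.inl h)
          · exact Or.inr (Or.inr (hx1 a ha hne))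
      have hga0 : ∀ k : Fin m, (gcount x T k a0 : ℝ) = 0 := by
        intro k
        unfold gcount
        by_cases h : ∀ a ∈ T, a = k ∨ a = a0 ∨ 1 ≤ x.1 a
        · rw [if_pos h, if_pos ha0T, ha0x]
          norm_num
        · rw [if_neg h]
          norm_num
      have hinner : ∀ k : Fin m, ∑ l, (if k ≠ l then (gcount x T k l : ℝ) else 0)
          = if a0 = k then ((n:ℝ) - T.card + 1) else 0 := by
        intro k
        rcases eq_or_ne a0 k with rfl | hka0
        · rw [if_pos rfl]
          have hc : ∀ l : Fin m, (if a0 ≠ l then (gcount x T a0 l : ℝ) else 0)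
              = (if a0 ≠ l then ((x.1 l : ℝ) - if l ∈ T then 1 else 0) else 0) := by
            intro l
            by_cases hl : a0 ≠ l
            · rw [if_pos hl, if_pos hl]
              unfold gcount
              rw [if_pos ((hP a0 l).mpr (Or.inl rfl))]
              by_cases hlT : l ∈ T
              · rw [if_pos hlT, if_pos hlT, Nat.cast_sub (hx1 l hlT (Ne.symm hl)), Nat.cast_one]
              · rw [if_neg hlT, if_neg hlT, sub_zero]
            · rw [if_neg hl, if_neg hl]
          rw [Finset.sum_congr rfl (fun l _ => hc l), sum_ite_ne, sum_b, if_pos ha0T, ha0x]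
          norm_num
        · rw [if_neg hka0]
          apply Finset.sum_eq_zero
          intro l _
          by_cases hkl : k ≠ l
          · rw [if_pos hkl]
            rcases eq_or_ne l a0 with rfl | hla0
            · exact hga0 k
            · unfold gcount
              rw [if_neg]
              · norm_num
              · rw [hP k l]
                rintro (h | h)
                · exact hka0 h
                · exact hla0 h.symm
          · rw [if_neg hkl]
      rw [Finset.sum_congr rfl (fun k _ => hinner k), Finset.sum_ite_eq, if_pos (mem_univ a0)]
      have heT : eT m n T x = 0 := by
        unfold eT
        rw [if_neg]
        intro h
        have := h a0 ha0T
        omega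
      have herase : ∑ a ∈ T, eT m n (T.erase a) x = 1 := by
        rw [Finset.sum_eq_single a0]
        · unfold eT
          rw [if_pos]
          intro b hb
          exact hx1 b (Finset.mem_of_mem_erase hb) (Finset.ne_of_mem_erase hb)
        · intro a ha hne
          unfold eT
          rw [if_neg]
          intro h
          have := h a0 (Finset.mem_erase.mpr ⟨Ne.symm hne, ha0T⟩)
          omega
        · intro h
          exact absurd ha0T h
      rw [heT, herase]
      ring
  · -- case 2 ≤ Z.card
    obtain ⟨a0, ha0, a1, ha1, hne01⟩ := Finset.one_lt_card.mp (by omega : 1 < Z.card)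
    have ha0T : a0 ∈ T := ((hmemZ a0).mp ha0).1
    have ha0x : x.1 a0 = 0 := ((hmemZ a0).mp ha0).2
    have ha1T : a1 ∈ T := ((hmemZ a1).mp ha1).1
    have ha1x : x.1 a1 = 0 := ((hmemZ a1).mp ha1).2
    have hLHS : ∑ k, ∑ l, (if k ≠ l then (gcount x T k l : ℝ) else 0) = 0 := by
      apply Finset.sum_eq_zero
      intro k _
      apply Finset.sum_eq_zero
      intro l _
      by_cases hkl : k ≠ l
      · rw [if_pos hkl]
        unfold gcount
        by_cases hPkl : ∀ a ∈ T, a = k ∨ a = l ∨ 1 ≤ x.1 a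
        · rw [if_pos hPkl]
          have h0 : a0 = k ∨ a0 = l := by
            rcases hPkl a0 ha0T with h | h | h
            · exact Or.inl h
            · exact Or.inr h
            · omega
          have h1 : a1 = k ∨ a1 = l := by
            rcases hPkl a1 ha1T with h | h | h
            · exact Or.inl h
            · exact Or.inr h
            · omega
          have hl : l = a0 ∨ l = a1 := by
            rcases h0 with h0 | h0 <;> rcases h1 with h1 | h1
            · exact absurd (h0.trans h1.symm) hne01
            · exact Or.inr h1.symm
            · exact Or.inl h0.symm
            · exact Or.inl h0.symm
          have hlT : l ∈ T := by
            rcases hl with rfl | rfl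
            · exact ha0T
            · exact ha1T
          have hlx : x.1 l = 0 := by
            rcases hl with rfl | rfl
            · exact ha0x
            · exact ha1x
          rw [if_pos hlT, hlx]
          norm_num
        · rw [if_neg hPkl]
          norm_num
      · rw [if_neg hkl]
    rw [hLHS]
    have heT : eT m n T x = 0 := by
      unfold eT
      rw [if_neg]
      intro h
      have := h a0 ha0T
      omega
    have herase : ∀ a ∈ T, eT m n (T.erase a) x = 0 := by
      intro a ha
      unfold eT
      rw [if_neg]
      intro h
      rcases eq_or_ne a a0 with rfl | hnea0
      · have := h a1 (Finset.mem_erase.mpr ⟨fun hh => hne01 hh.symm, ha1T⟩)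
        omega
      · have := h a0 (Finset.mem_erase.mpr ⟨Ne.symm hnea0, ha0T⟩)
        omega
    rw [heT, Finset.sum_congr rfl herase, Finset.sum_const, smul_zero]
    ring


lemma key (T : Finset (Fin m)) :
    (SR m n).adjMatrix ℝ *ᵥ eT m n T
      = (((n:ℝ) - T.card) * ((m:ℝ) - T.card) - (n:ℝ)) • eT m n T
        + ((n:ℝ) - T.card + 1) • ∑ a ∈ T, eT m n (T.erase a) := by
  funext x
  rw [SimpleGraph.adjMatrix_mulVec_apply, step1, key_pointwise]
  simp only [Pi.add_apply, Pi.smul_apply, Finset.sum_apply, smul_eq_mul]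

/-- the eigenvalue -/
noncomputable def lam (m n j : ℕ) : ℝ := ((n:ℝ) - j) * ((m:ℝ) - j) - n

lemma lam_sub (s t : ℕ) : lam m n s - lam m n t = ((t:ℝ) - s) * ((m:ℝ) + n - s - t) := by
  unfold lam
  ring

lemma lam_ne (s t : ℕ) (hst : s < t) (htn : t ≤ n) (htm : t < m) :
    lam m n t - lam m n s ≠ 0 := by
  have h1 : (0:ℝ) < (t:ℝ) - s := by
    have : (s:ℝ) < t := by exact_mod_cast hst
    linarith
  have h2 : (0:ℝ) < (m:ℝ) + n - s - t := by
    have hs : (s:ℝ) ≤ (t:ℝ) - 1 := by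
      have : (s:ℝ) + 1 ≤ t := by exact_mod_cast hst
      linarith
    have hm' : (t:ℝ) + 1 ≤ m := by exact_mod_cast htm
    have hn' : (t:ℝ) ≤ n := by exact_mod_cast htn
    linarith
  have := lam_sub (m := m) (n := n) s t
  intro hcon
  have : lam m n s - lam m n t = 0 := by linarith [sub_eq_zero.mp hcon]
  rw [lam_sub] at this
  nlinarith

noncomputable def coeff (m n t : ℕ) (s : ℕ) : ℝ :=
  ∏ j ∈ Finset.Ico s t, (((n:ℝ) - j) * ((t:ℝ) - j) / (lam m n t - lam m n j))

lemma coeff_self (t : ℕ) : coeff m n t t = 1 := by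
  unfold coeff
  simp

lemma coeff_rec (t : ℕ) (htn : t ≤ n) (htm : t < m) (s : ℕ) (hs : s ≤ t) :
    coeff m n t s * (lam m n t - lam m n s)
      = coeff m n t (s+1) * (((n:ℝ) - s) * ((t:ℝ) - s)) := by
  rcases eq_or_lt_of_le hs with rfl | hlt
  · simp
  · unfold coeff
    rw [Finset.prod_eq_prod_Ico_succ_bot hlt]
    have hne := lam_ne (m := m) (n := n) s t hlt htn htm
    set P := ∏ j ∈ Finset.Ico (s+1) t, (((n:ℝ) - j) * ((t:ℝ) - j) / (lam m n t - lam m n j))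
    set D := lam m n t - lam m n s
    have h1 : (((n:ℝ) - s) * ((t:ℝ) - s) / D * P) * D
        = P * (((n:ℝ) - s) * ((t:ℝ) - s) / D * D) := by ring
    rw [h1, div_mul_cancel₀ _ hne]

/-- the eigenvector attached to `T` -/
noncomputable def wT (m n : ℕ) (T : Finset (Fin m)) : SRVertex m n → ℝ :=
  ∑ S ∈ T.powerset, coeff m n T.card S.card • eT m n S

lemma wT_eigen (T : Finset (Fin m)) (htn : T.card ≤ n) (htm : T.card < m) :
    (SR m n).adjMatrix ℝ *ᵥ wT m n T = lam m n T.card • wT m n T := by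
  classical
  unfold wT
  rw [Finset.smul_sum]
  have hdist : (SR m n).adjMatrix ℝ *ᵥ (∑ S ∈ T.powerset, coeff m n T.card S.card • eT m n S)
      = ∑ S ∈ T.powerset, coeff m n T.card S.card • ((SR m n).adjMatrix ℝ *ᵥ eT m n S) := by
    rw [show (SR m n).adjMatrix ℝ *ᵥ (∑ S ∈ T.powerset, coeff m n T.card S.card • eT m n S)
        = ((SR m n).adjMatrix ℝ).mulVecLin (∑ S ∈ T.powerset, coeff m n T.card S.card • eT m n S)
        from rfl, map_sum]
    apply Finset.sum_congr rfl
    intro S _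
    rw [_root_.map_smul]
    rfl
  rw [hdist]
  calc ∑ S ∈ T.powerset, coeff m n T.card S.card • ((SR m n).adjMatrix ℝ *ᵥ eT m n S)
      = ∑ S ∈ T.powerset, (coeff m n T.card S.card * lam m n S.card) • eT m n S
          + ∑ S ∈ T.powerset, ∑ a ∈ S,
            (coeff m n T.card S.card * ((n:ℝ) - S.card + 1)) • eT m n (S.erase a) := by
        rw [← Finset.sum_add_distrib]
        apply Finset.sum_congr rfl
        intro S _
        rw [key S, smul_add, smul_smul, smul_smul, Finset.smul_sum]
        rfl
    _ = ∑ S ∈ T.powerset, (coeff m n T.card S.card * lam m n S.card) • eT m n S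
          + ∑ U ∈ T.powerset, ∑ b ∈ T \ U,
            (coeff m n T.card (U.card + 1) * ((n:ℝ) - U.card)) • eT m n U := by
        congr 1
        rw [Finset.sum_sigma', Finset.sum_sigma']
        apply Finset.sum_nbij' (i := fun p => ⟨p.1.erase p.2, p.2⟩)
          (j := fun p => ⟨insert p.2 p.1, p.2⟩)
        · rintro ⟨S, a⟩ hp
          simp only [Finset.mem_sigma, Finset.mem_powerset] at hp ⊢
          refine ⟨Finset.Subset.trans (Finset.erase_subset _ _) hp.1, ?_⟩
          simp only [Finset.mem_sdiff, Finset.mem_erase]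
          exact ⟨hp.1 hp.2, fun h => h.1 rfl⟩
        · rintro ⟨U, b⟩ hp
          simp only [Finset.mem_sigma, Finset.mem_powerset, Finset.mem_sdiff] at hp ⊢
          exact ⟨Finset.insert_subset hp.2.1 hp.1, Finset.mem_insert_self _ _⟩
        · rintro ⟨S, a⟩ hp
          simp only [Finset.mem_sigma, Finset.mem_powerset] at hp
          simp only [Sigma.mk.inj_iff, heq_eq_eq]
          exact ⟨Finset.insert_erase hp.2, trivial⟩
        · rintro ⟨U, b⟩ hp
          simp only [Finset.mem_sigma, Finset.mem_powerset, Finset.mem_sdiff] at hp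
          simp only [Sigma.mk.inj_iff, heq_eq_eq]
          exact ⟨Finset.erase_insert hp.2.2, trivial⟩
        · rintro ⟨S, a⟩ hp
          simp only [Finset.mem_sigma, Finset.mem_powerset] at hp
          have hcard : (S.erase a).card = S.card - 1 := Finset.card_erase_of_mem hp.2
          have hpos : 1 ≤ S.card := Finset.card_pos.mpr ⟨a, hp.2⟩
          have h1 : coeff m n T.card ((S.erase a).card + 1) = coeff m n T.card S.card := by
            rw [hcard]
            congr 1
            omega
          have h2 : ((n:ℝ) - ((S.erase a).card : ℝ)) = (n:ℝ) - S.card + 1 := by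
            rw [hcard]
            have hc : ((S.card - 1 : ℕ) : ℝ) = (S.card : ℝ) - 1 := by
              have : (1:ℝ) ≤ (S.card : ℝ) := by exact_mod_cast hpos
              push_cast [hpos]
              ring
            rw [hc]
            ring
          show (coeff m n T.card S.card * ((n:ℝ) - S.card + 1)) • eT m n (S.erase a)
            = (coeff m n T.card ((S.erase a).card + 1) * ((n:ℝ) - (S.erase a).card)) • eT m n (S.erase a)
          rw [h1, h2]
    _ = ∑ S ∈ T.powerset, (coeff m n T.card S.card * lam m n S.card) • eT m n S
          + ∑ U ∈ T.powerset,
            (coeff m n T.card (U.card + 1) * (((n:ℝ) - U.card) * ((T.card:ℝ) - U.card))) • eT m n U := by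
        congr 1
        apply Finset.sum_congr rfl
        intro U hU
        rw [Finset.sum_const, Finset.card_sdiff_of_subset (Finset.mem_powerset.mp hU)]
        have hle : U.card ≤ T.card := Finset.card_le_card (Finset.mem_powerset.mp hU)
        have hc : ((T.card - U.card : ℕ) : ℝ) = (T.card : ℝ) - U.card := by
          push_cast [hle]
          ring
        rw [← Nat.cast_smul_eq_nsmul ℝ, hc, smul_smul]
        congr 1
        ring
    _ = ∑ x ∈ T.powerset, lam m n T.card • coeff m n T.card x.card • eT m n x := by
        rw [← Finset.sum_add_distrib]
        apply Finset.sum_congr rfl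
        intro S hS
        rw [smul_smul, ← add_smul]
        have hs : S.card ≤ T.card := Finset.card_le_card (Finset.mem_powerset.mp hS)
        have hrec := coeff_rec (m := m) (n := n) T.card htn htm S.card hs
        congr 1
        linear_combination -hrec

/-- evaluation vertex with support `S` -/
def qv (S : Finset (Fin m)) (hS : S.Nonempty) (hSn : S.card ≤ n) : SRVertex m n :=
  ⟨fun a => if a ∈ S then (if a = S.min' hS then n - S.card + 1 else 1) else 0, by
    rw [← Finset.sum_filter]
    have hfil : Finset.filter (fun a => a ∈ S) univ = S := by
      ext a; simp
    rw [hfil, ← Finset.add_sum_erase _ _ (S.min'_mem hS), if_pos rfl]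
    have hrest : ∑ a ∈ S.erase (S.min' hS), (if a = S.min' hS then n - S.card + 1 else 1)
        = S.card - 1 := by
      rw [Finset.sum_congr rfl (fun a ha => if_neg (Finset.ne_of_mem_erase ha)),
        Finset.sum_const, Finset.card_erase_of_mem (S.min'_mem hS), smul_eq_mul, mul_one]
    rw [hrest]
    have hpos : 1 ≤ S.card := Finset.card_pos.mpr hS
    omega⟩

lemma eT_qv (U S : Finset (Fin m)) (hS : S.Nonempty) (hSn : S.card ≤ n) :
    eT m n U (qv S hS hSn) = if U ⊆ S then 1 else 0 := by
  unfold eT qv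
  congr 1
  simp only [eq_iff_iff]
  constructor
  · intro h a ha
    by_contra hcon
    have := h a ha
    rw [if_neg hcon] at this
    omega
  · intro h a ha
    rw [if_pos (h ha)]
    have hpos : 1 ≤ S.card := Finset.card_pos.mpr hS
    by_cases hmin : a = S.min' hS
    · rw [if_pos hmin]; omega
    · rw [if_neg hmin]

lemma eval_rel (a : Finset (Fin m) → ℝ)
    (hrel : ∑ T ∈ (univ : Finset (Fin m)).powerset, a T • eT m n T = 0)
    (S : Finset (Fin m)) (hS : S.Nonempty) (hSn : S.card ≤ n) :
    ∑ T ∈ S.powerset, a T = 0 := by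
  have h := congrFun hrel (qv S hS hSn)
  rw [Finset.sum_apply] at h
  simp only [Pi.smul_apply, smul_eq_mul, Pi.zero_apply] at h
  have h2 : ∑ T ∈ (univ : Finset (Fin m)).powerset, a T * eT m n T (qv S hS hSn)
      = ∑ T ∈ (univ : Finset (Fin m)).powerset, (if T ⊆ S then a T else 0) := by
    apply Finset.sum_congr rfl
    intro T _
    rw [eT_qv T S hS hSn]
    by_cases hc : T ⊆ S
    · rw [if_pos hc, if_pos hc, mul_one]
    · rw [if_neg hc, if_neg hc, mul_zero]
  rw [h2, ← Finset.sum_filter] at h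
  have h3 : Finset.filter (fun T => T ⊆ S) (univ : Finset (Fin m)).powerset = S.powerset := by
    ext T
    simp only [Finset.mem_filter, Finset.mem_powerset]
    exact ⟨fun hh => hh.2, fun hh => ⟨Finset.subset_univ T, hh⟩⟩
  rw [h3] at h
  exact h

lemma relations (a : Finset (Fin m) → ℝ)
    (hrel : ∑ T ∈ (univ : Finset (Fin m)).powerset, a T • eT m n T = 0) :
    ∀ T : Finset (Fin m), T.card ≤ n → a T = (-1)^T.card * a ∅ := by
  intro T
  induction T using Finset.strongInduction with
  | _ T ih =>
    intro hTn
    rcases Finset.eq_empty_or_nonempty T with rfl | hT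
    · simp
    · have hg : ∑ S ∈ T.powerset, a S = 0 := eval_rel a hrel T hT hTn
      have hsplit : a T + ∑ S ∈ T.powerset.erase T, a S = ∑ S ∈ T.powerset, a S :=
        Finset.add_sum_erase _ _ (Finset.mem_powerset_self T)
      have hind : ∑ S ∈ T.powerset.erase T, a S
          = (∑ S ∈ T.powerset.erase T, ((-1:ℝ))^S.card) * a ∅ := by
        rw [Finset.sum_mul]
        apply Finset.sum_congr rfl
        intro S hSmem
        have hsub : S ⊆ T := Finset.mem_powerset.mp (Finset.mem_of_mem_erase hSmem)
        have hne : S ≠ T := Finset.ne_of_mem_erase hSmem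
        exact ih S (Finset.ssubset_iff_subset_ne.mpr ⟨hsub, hne⟩)
          (le_trans (Finset.card_le_card hsub) hTn)
      have halt : ∑ S ∈ T.powerset, ((-1:ℝ))^S.card = 0 := by
        have hz := Finset.sum_powerset_neg_one_pow_card (x := T)
        rw [if_neg (Finset.nonempty_iff_ne_empty.mp hT)] at hz
        have hc : ((∑ S ∈ T.powerset, (-1:ℤ)^S.card : ℤ) : ℝ) = 0 := by rw [hz]; simp
        push_cast at hc
        exact hc
      have h3 : ∑ S ∈ T.powerset.erase T, ((-1:ℝ))^S.card = -(-1)^T.card := by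
        have h4 := Finset.add_sum_erase T.powerset (fun S => ((-1:ℝ))^S.card)
          (Finset.mem_powerset_self T)
        rw [halt] at h4
        linarith
      rw [hind, h3] at hsplit
      rw [hg] at hsplit
      linear_combination hsplit

lemma core (t : ℕ) (htn : t ≤ n) (htm : t < m) (d : Finset (Fin m) → ℝ)
    (hsum : ∑ T ∈ Finset.powersetCard t (univ : Finset (Fin m)), d T • wT m n T = 0) :
    ∃ γ : ℝ, (t < n → γ = 0) ∧
      ∀ S ∈ Finset.powersetCard t (univ : Finset (Fin m)), d S = γ := by
  classical
  set pcd := Finset.powersetCard t (univ : Finset (Fin m)) with hpcd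
  set A : Finset (Fin m) → ℝ :=
    fun S => coeff m n t S.card * ∑ T ∈ pcd.filter (fun T => S ⊆ T), d T with hA
  have hcardT : ∀ T ∈ pcd, T.card = t := fun T hT => (Finset.mem_powersetCard.mp hT).2
  have hrel : ∑ S ∈ (univ : Finset (Fin m)).powerset, A S • eT m n S = 0 := by
    rw [← hsum]
    calc ∑ S ∈ (univ : Finset (Fin m)).powerset, A S • eT m n S
        = ∑ S ∈ (univ : Finset (Fin m)).powerset, ∑ T ∈ pcd,
            (if S ⊆ T then (coeff m n t S.card * d T) • eT m n S else 0) := by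
          apply Finset.sum_congr rfl
          intro S _
          rw [hA]
          dsimp only
          rw [Finset.mul_sum, Finset.sum_smul, Finset.sum_filter]
      _ = ∑ T ∈ pcd, ∑ S ∈ (univ : Finset (Fin m)).powerset,
            (if S ⊆ T then (coeff m n t S.card * d T) • eT m n S else 0) := Finset.sum_comm
      _ = ∑ T ∈ pcd, d T • wT m n T := by
          apply Finset.sum_congr rfl
          intro T hT
          rw [← Finset.sum_filter]
          have hfil : Finset.filter (fun S => S ⊆ T) (univ : Finset (Fin m)).powerset
              = T.powerset := by
            ext S
            simp only [Finset.mem_filter, Finset.mem_powerset]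
            exact ⟨fun h => h.2, fun h => ⟨Finset.subset_univ S, h⟩⟩
          rw [hfil]
          unfold wT
          rw [Finset.smul_sum]
          apply Finset.sum_congr rfl
          intro S _
          rw [smul_smul, hcardT T hT, mul_comm]
  have h0 : ∀ S : Finset (Fin m), ¬ S.card ≤ t → A S = 0 := by
    intro S hS
    rw [hA]
    dsimp only
    have : pcd.filter (fun T => S ⊆ T) = ∅ := by
      rw [Finset.filter_eq_empty_iff]
      intro T hT hsub
      exact hS (hcardT T hT ▸ Finset.card_le_card hsub)
    simp only [this, Finset.sum_empty, mul_zero]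
  have hAS := relations A hrel
  have hdS : ∀ S ∈ pcd, d S = A S := by
    intro S hS
    rw [hA]
    dsimp only
    have hcS : S.card = t := hcardT S hS
    rw [hcS, coeff_self]
    have hfil : pcd.filter (fun T => S ⊆ T) = {S} := by
      ext T
      simp only [Finset.mem_filter, Finset.mem_singleton]
      constructor
      · rintro ⟨hT, hsub⟩
        exact ((Finset.eq_of_subset_of_card_le hsub
          (by rw [hcardT T hT, hcS])).symm)
      · rintro rfl
        exact ⟨hS, Finset.Subset.refl _⟩
    rw [hfil, Finset.sum_singleton, one_mul]
  refine ⟨(-1:ℝ)^t * A ∅, ?_, ?_⟩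
  · intro htlt
    -- evaluate at a set of size t+1
    obtain ⟨S1, hS1⟩ := Finset.powersetCard_nonempty.mpr
      (by rw [Finset.card_univ, Fintype.card_fin]; omega :
        t + 1 ≤ (univ : Finset (Fin m)).card)
    have hS1card : S1.card = t + 1 := (Finset.mem_powersetCard.mp hS1).2
    have hS1ne : S1.Nonempty := Finset.card_pos.mp (by omega)
    have heval : ∑ S ∈ S1.powerset, A S = 0 :=
      eval_rel A hrel S1 hS1ne (by omega)
    have hsplit : A S1 + ∑ S ∈ S1.powerset.erase S1, A S = ∑ S ∈ S1.powerset, A S :=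
      Finset.add_sum_erase _ _ (Finset.mem_powerset_self S1)
    have hAS1 : A S1 = 0 := h0 S1 (by omega)
    have hind : ∑ S ∈ S1.powerset.erase S1, A S
        = (∑ S ∈ S1.powerset.erase S1, ((-1:ℝ))^S.card) * A ∅ := by
      rw [Finset.sum_mul]
      apply Finset.sum_congr rfl
      intro S hSmem
      have hsub : S ⊆ S1 := Finset.mem_powerset.mp (Finset.mem_of_mem_erase hSmem)
      have hne : S ≠ S1 := Finset.ne_of_mem_erase hSmem
      have hlt : S.card < S1.card :=
        Finset.card_lt_card (Finset.ssubset_iff_subset_ne.mpr ⟨hsub, hne⟩)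
      exact hAS S (by omega)
    have halt : ∑ S ∈ S1.powerset, ((-1:ℝ))^S.card = 0 := by
      have hz := Finset.sum_powerset_neg_one_pow_card (x := S1)
      rw [if_neg (Finset.nonempty_iff_ne_empty.mp hS1ne)] at hz
      have hc : ((∑ S ∈ S1.powerset, (-1:ℤ)^S.card : ℤ) : ℝ) = 0 := by rw [hz]; simp
      push_cast at hc
      exact hc
    have h3 : ∑ S ∈ S1.powerset.erase S1, ((-1:ℝ))^S.card = -(-1)^S1.card := by
      have h4 := Finset.add_sum_erase S1.powerset (fun S => ((-1:ℝ))^S.card)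
        (Finset.mem_powerset_self S1)
      rw [halt] at h4
      linarith
    rw [← hsplit, hAS1, hind, h3, hS1card] at heval
    have hA0 : A ∅ = 0 := by
      have hne : (-(-1:ℝ)^(t+1)) ≠ 0 := by
        rcases neg_one_pow_eq_one_iff_even (R := ℝ) (n := t+1) (by norm_num) |>.2 with _
        · rcases Nat.even_or_odd (t+1) with he | ho
          · rw [he.neg_one_pow]; norm_num
          · rw [ho.neg_one_pow]; norm_num
      have := mul_eq_zero.mp (by linarith : (-(-1:ℝ)^(t+1)) * A ∅ = 0)
      tauto
    rw [hA0, mul_zero]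
  · intro S hS
    rw [hdS S hS, hAS S (by rw [hcardT S hS]; exact htn), hcardT S hS]


end SRProof

/-- For `0 ≤ i ≤ min(m,n) - 1`, the eigenvalue `(n-i)(m-i) - n` of the adjacency matrix of
`SR(m,n)` has multiplicity at least `choose m i`; and if `n < m` then the eigenvalue `-n`
has multiplicity at least `choose m n - 1`. -/
theorem SR_common_spectrum_lower_bounds (m n : ℕ) (hm : 1 ≤ m) (hn : 1 ≤ n) :
    (∀ i : ℕ, i ≤ min m n - 1 →
      Nat.choose m i ≤
        Module.finrank ℝ
          (Module.End.eigenspace (Matrix.toLin' ((SR m n).adjMatrix ℝ))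
            ((((n : ℤ) - i) * ((m : ℤ) - i) - n : ℤ) : ℝ))) ∧
    (n < m →
      Nat.choose m n - 1 ≤
        Module.finrank ℝ
          (Module.End.eigenspace (Matrix.toLin' ((SR m n).adjMatrix ℝ)) (-(n : ℝ)))) := by
  classical
  constructor
  · intro i hi
    have hin : i < n := by omega
    have him : i < m := by omega
    have hcast : ((((n : ℤ) - i) * ((m : ℤ) - i) - n : ℤ) : ℝ) = SRProof.lam m n i := by
      unfold SRProof.lam
      push_cast
      ring
    rw [hcast]
    set pcd := Finset.powersetCard i (Finset.univ : Finset (Fin m)) with hpcd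
    have hli : LinearIndependent ℝ (fun T : pcd => SRProof.wT m n T.1) := by
      rw [Fintype.linearIndependent_iff]
      intro g hg
      set d : Finset (Fin m) → ℝ := fun T => if h : T ∈ pcd then g ⟨T, h⟩ else 0 with hd
      have hsum : ∑ T ∈ pcd, d T • SRProof.wT m n T = 0 := by
        rw [← hg, ← Finset.sum_coe_sort pcd (fun T => d T • SRProof.wT m n T)]
        apply Finset.sum_congr rfl
        intro T _
        rw [hd]
        dsimp only
        rw [dif_pos T.2]
      obtain ⟨γ, hγ0, hγ⟩ := SRProof.core i (le_of_lt hin) him d hsum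
      intro T
      have hT := hγ T.1 T.2
      rw [hd] at hT
      dsimp only at hT
      rw [dif_pos T.2] at hT
      rw [hT, hγ0 hin]
    have hmem : ∀ T : pcd, SRProof.wT m n T.1 ∈
        Module.End.eigenspace (Matrix.toLin' ((SR m n).adjMatrix ℝ)) (SRProof.lam m n i) := by
      intro T
      rw [Module.End.mem_eigenspace_iff, Matrix.toLin'_apply]
      have hc : T.1.card = i := (Finset.mem_powersetCard.mp T.2).2
      rw [← hc]
      exact SRProof.wT_eigen T.1 (hc ▸ le_of_lt hin) (hc ▸ him)
    calc Nat.choose m i = Fintype.card pcd := by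
          rw [Fintype.card_coe, Finset.card_powersetCard, Finset.card_univ, Fintype.card_fin]
      _ = Module.finrank ℝ (Submodule.span ℝ
            (Set.range (fun T : pcd => SRProof.wT m n T.1))) :=
          (finrank_span_eq_card hli).symm
      _ ≤ _ := Submodule.finrank_mono (Submodule.span_le.mpr
          (by rintro _ ⟨T, rfl⟩; exact hmem T))
  · intro hnm
    have hcast : -(n:ℝ) = SRProof.lam m n n := by
      unfold SRProof.lam
      push_cast
      ring
    rw [hcast]
    obtain ⟨T1, hT1⟩ := Finset.powersetCard_nonempty.mpr
      (by rw [Finset.card_univ, Fintype.card_fin]; omega :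
        n ≤ (Finset.univ : Finset (Fin m)).card)
    set pcd := Finset.powersetCard n (Finset.univ : Finset (Fin m)) with hpcd
    set s := pcd.erase T1 with hs
    have hli : LinearIndependent ℝ (fun T : s => SRProof.wT m n T.1) := by
      rw [Fintype.linearIndependent_iff]
      intro g hg
      set d : Finset (Fin m) → ℝ := fun T => if h : T ∈ s then g ⟨T, h⟩ else 0 with hd
      have hdT1 : d T1 = 0 := by
        rw [hd]
        dsimp only
        rw [dif_neg (Finset.notMem_erase T1 pcd)]
      have hsum : ∑ T ∈ pcd, d T • SRProof.wT m n T = 0 := by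
        rw [← Finset.add_sum_erase _ _ hT1, hdT1, zero_smul, zero_add]
        rw [← hg, ← Finset.sum_coe_sort s (fun T => d T • SRProof.wT m n T)]
        apply Finset.sum_congr rfl
        intro T _
        rw [hd]
        dsimp only
        rw [dif_pos T.2]
      obtain ⟨γ, -, hγ⟩ := SRProof.core n le_rfl hnm d hsum
      have hγ0 : γ = 0 := by
        rw [← hγ T1 hT1, hdT1]
      intro T
      have hT := hγ T.1 (Finset.mem_of_mem_erase T.2)
      rw [hd] at hT
      dsimp only at hT
      rw [dif_pos T.2] at hT
      rw [hT, hγ0]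
    have hmem : ∀ T : s, SRProof.wT m n T.1 ∈
        Module.End.eigenspace (Matrix.toLin' ((SR m n).adjMatrix ℝ)) (SRProof.lam m n n) := by
      intro T
      rw [Module.End.mem_eigenspace_iff, Matrix.toLin'_apply]
      have hc : T.1.card = n :=
        (Finset.mem_powersetCard.mp (Finset.mem_of_mem_erase T.2)).2
      have heig := SRProof.wT_eigen (m := m) (n := n) T.1 (le_of_eq hc) (by omega)
      rw [hc] at heig
      exact heig
    calc Nat.choose m n - 1 = Fintype.card s := by
          rw [Fintype.card_coe, hs, Finset.card_erase_of_mem hT1, hpcd,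
            Finset.card_powersetCard, Finset.card_univ, Fintype.card_fin]
      _ = Module.finrank ℝ (Submodule.span ℝ
            (Set.range (fun T : s => SRProof.wT m n T.1))) :=
          (finrank_span_eq_card hli).symm
      _ ≤ _ := Submodule.finrank_mono (Submodule.span_le.mpr
          (by rintro _ ⟨T, rfl⟩; exact hmem T))
end

section
/- Let m ≥ 2 and n ≥ 1. Then the clique number of SR(m,n) (the maximum cardinality of a set of pairwise adjacent vertices) equals max(m, n+1). -/
open Matrix Polynomial

namespace SRAux

variable {m n : ℕ}

lemma adj_def {x y : SRVertex m n} :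
    (SR m n).Adj x y ↔ (Finset.univ.filter fun i => x.1 i ≠ y.1 i).card = 2 := Iff.rfl

/-- `y` is obtained from `x` by moving `δ` from coordinate `i` to coordinate `j`. -/
def Move (x y : SRVertex m n) (i j : Fin m) (δ : ℤ) : Prop :=
  i ≠ j ∧ δ ≠ 0 ∧ (y.1 i : ℤ) = (x.1 i : ℤ) - δ ∧ (y.1 j : ℤ) = (x.1 j : ℤ) + δ ∧
    ∀ l, l ≠ i → l ≠ j → x.1 l = y.1 l

lemma Move.flip {x y : SRVertex m n} {i j : Fin m} {δ : ℤ} (h : Move x y i j δ) :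
    Move x y j i (-δ) := by
  obtain ⟨hij, hδ, hi, hj, hl⟩ := h
  exact ⟨hij.symm, neg_ne_zero.mpr hδ, by omega, by omega, fun l hli hlj => hl l hlj hli⟩

lemma sum_pair_eq {x y : SRVertex m n} {i j : Fin m} (hij : i ≠ j)
    (h : ∀ l, l ≠ i → l ≠ j → x.1 l = y.1 l) :
    (x.1 i : ℤ) + x.1 j = (y.1 i : ℤ) + y.1 j := by
  have key : ∑ l ∈ ({i, j} : Finset (Fin m)), ((x.1 l : ℤ) - y.1 l)
      = ∑ l, ((x.1 l : ℤ) - y.1 l) := by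
    refine Finset.sum_subset (Finset.subset_univ _) ?_
    intro l _ hl
    simp only [Finset.mem_insert, Finset.mem_singleton] at hl
    push_neg at hl
    rw [h l hl.1 hl.2]; ring
  rw [Finset.sum_pair hij] at key
  have hx : ∑ l, ((x.1 l : ℤ)) = (n : ℤ) := by exact_mod_cast x.2
  have hy : ∑ l, ((y.1 l : ℤ)) = (n : ℤ) := by exact_mod_cast y.2
  rw [Finset.sum_sub_distrib, hx, hy] at key
  omega

lemma adj_iff_move {x y : SRVertex m n} :
    (SR m n).Adj x y ↔ ∃ i j δ, Move x y i j δ := by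
  rw [adj_def]
  constructor
  · intro h
    obtain ⟨i, j, hij, hfil⟩ := Finset.card_eq_two.mp h
    have hi : x.1 i ≠ y.1 i := by
      have : i ∈ Finset.univ.filter fun l => x.1 l ≠ y.1 l := by
        rw [hfil]; simp
      simpa using this
    have hagree : ∀ l, l ≠ i → l ≠ j → x.1 l = y.1 l := by
      intro l hli hlj
      by_contra hne
      have : l ∈ Finset.univ.filter fun l => x.1 l ≠ y.1 l := by simp [hne]
      rw [hfil] at this
      simp [hli, hlj] at this
    have hsum := sum_pair_eq hij hagree
    refine ⟨i, j, (x.1 i : ℤ) - y.1 i, hij, ?_, by ring, by omega, hagree⟩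
    intro h0
    apply hi
    have : (x.1 i : ℤ) = y.1 i := by omega
    exact_mod_cast this
  · rintro ⟨i, j, δ, hij, hδ, hi, hj, hagree⟩
    have hfil : (Finset.univ.filter fun l => x.1 l ≠ y.1 l) = {i, j} := by
      ext l
      simp only [Finset.mem_filter, Finset.mem_univ, true_and, Finset.mem_insert,
        Finset.mem_singleton]
      constructor
      · intro hne
        by_contra hc
        push_neg at hc
        exact hne (hagree l hc.1 hc.2)
      · rintro (rfl | rfl)
        · intro he; apply hδ; have : (x.1 l : ℤ) = y.1 l := by exact_mod_cast he
          omega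
        · intro he; apply hδ; have : (x.1 l : ℤ) = y.1 l := by exact_mod_cast he
          omega
    rw [hfil, Finset.card_pair hij]

lemma Move.ne {x y : SRVertex m n} {i j : Fin m} {δ : ℤ} (h : Move x y i j δ) : x ≠ y := by
  obtain ⟨hij, hδ, hi, _, _⟩ := h
  intro he
  rw [he] at hi
  omega

lemma move_eq {x y z : SRVertex m n} {i j : Fin m} {δ : ℤ}
    (h1 : Move x y i j δ) (h2 : Move x z i j δ) : y = z := by
  obtain ⟨hij, hδ, hi1, hj1, hl1⟩ := h1
  obtain ⟨_, _, hi2, hj2, hl2⟩ := h2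
  apply Subtype.ext
  funext l
  by_cases hli : l = i
  · subst hli; exact_mod_cast hi1.trans hi2.symm
  · by_cases hlj : l = j
    · subst hlj; exact_mod_cast hj1.trans hj2.symm
    · exact (hl1 l hli hlj).symm.trans (hl2 l hli hlj)

lemma three_diff_not_adj {y z : SRVertex m n} {i j k : Fin m}
    (hij : i ≠ j) (hik : i ≠ k) (hjk : j ≠ k)
    (h1 : (y.1 i : ℤ) ≠ z.1 i) (h2 : (y.1 j : ℤ) ≠ z.1 j) (h3 : (y.1 k : ℤ) ≠ z.1 k)
    (hadj : (SR m n).Adj y z) : False := by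
  rw [adj_def] at hadj
  have hsub : ({i, j, k} : Finset (Fin m)) ⊆ Finset.univ.filter fun l => y.1 l ≠ z.1 l := by
    intro l hl
    simp only [Finset.mem_insert, Finset.mem_singleton] at hl
    simp only [Finset.mem_filter, Finset.mem_univ, true_and]
    rcases hl with rfl | rfl | rfl
    · exact fun h => h1 (by exact_mod_cast h)
    · exact fun h => h2 (by exact_mod_cast h)
    · exact fun h => h3 (by exact_mod_cast h)
  have hcard := Finset.card_le_card hsub
  rw [hadj] at hcard
  have : ({i, j, k} : Finset (Fin m)).card = 3 := by
    rw [Finset.card_insert_of_notMem (by simp [hij, hik]), Finset.card_pair hjk]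
  omega

/-- If two moves from `x` share their source coordinate and the targets are distinct,
adjacency of the endpoints forces equal amounts. -/
lemma apex {x y z : SRVertex m n} {i j q : Fin m} {δ ε : ℤ}
    (h1 : Move x y i j δ) (h2 : Move x z i q ε) (hjq : j ≠ q)
    (hyz : (SR m n).Adj y z) : δ = ε := by
  obtain ⟨hij, hδ, hyi, hyj, hly⟩ := h1
  obtain ⟨hiq, hε, hzi, hzq, hlz⟩ := h2
  by_contra hne
  refine three_diff_not_adj hij (show i ≠ q from hiq) hjq ?_ ?_ ?_ hyz
  · omega
  · have hzj : z.1 j = x.1 j := (hlz j hij.symm hjq).symm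
    rw [hzj]; omega
  · have hyq : y.1 q = x.1 q := (hly q hiq.symm hjq.symm).symm
    rw [hyq]; omega

lemma move_unique {x y : SRVertex m n} {i j p q : Fin m} {δ γ : ℤ}
    (h1 : Move x y i j δ) (h2 : Move x y p q γ) :
    (p = i ∧ q = j ∧ γ = δ) ∨ (p = j ∧ q = i ∧ γ = -δ) := by
  obtain ⟨hij, hδ, hyi, hyj, hly⟩ := h1
  obtain ⟨hpq, hγ, hyp, hyq, hlp⟩ := h2
  have hp : p = i ∨ p = j := by
    by_contra hc; push_neg at hc
    have := hly p hc.1 hc.2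
    omega
  have hq : q = i ∨ q = j := by
    by_contra hc; push_neg at hc
    have := hly q hc.1 hc.2
    omega
  rcases hp with rfl | rfl
  · rcases hq with rfl | rfl
    · exact absurd rfl hpq
    · left; refine ⟨rfl, rfl, ?_⟩; omega
  · rcases hq with rfl | rfl
    · right; refine ⟨rfl, rfl, ?_⟩; omega
    · exact absurd rfl hpq

lemma triangle {x y z : SRVertex m n} (hxy : (SR m n).Adj x y) (hxz : (SR m n).Adj x z)
    (hyz : (SR m n).Adj y z) :
    (∃ i j δ ε, Move x y i j δ ∧ Move x z i j ε) ∨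
    (∃ a b c δ, b ≠ c ∧ Move x y a b δ ∧ Move x z a c δ) := by
  obtain ⟨i, j, δ, h1⟩ := adj_iff_move.mp hxy
  obtain ⟨p, q, ε, h2⟩ := adj_iff_move.mp hxz
  have hij : i ≠ j := h1.1
  have hpq : p ≠ q := h2.1
  by_cases hpi : p = i
  · subst hpi
    by_cases hqj : q = j
    · subst hqj; exact Or.inl ⟨p, q, δ, ε, h1, h2⟩
    · -- shared source p = i, targets j ≠ q
      have hδε := apex h1 h2 (fun h => hqj h.symm) hyz
      exact Or.inr ⟨p, j, q, δ, fun h => hqj h.symm, h1, hδε ▸ h2⟩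
  · by_cases hpj : p = j
    · subst hpj
      by_cases hqi : q = i
      · subst hqi
        exact Or.inl ⟨q, p, δ, -ε, h1, h2.flip⟩
      · -- shared coordinate is p = j : flip first move
        have h1' := h1.flip
        have hδε := apex h1' h2 (fun h => hqi h.symm) hyz
        exact Or.inr ⟨p, i, q, -δ, fun h => hqi h.symm, h1', hδε ▸ h2⟩
    · -- p ∉ {i, j}
      by_cases hqi : q = i
      · subst hqi
        have h2' := h2.flip
        have hδε := apex h1 h2' (fun h => hpj h.symm) hyz
        exact Or.inr ⟨q, j, p, δ, fun h => hpj h.symm, h1, hδε ▸ h2'⟩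
      · by_cases hqj : q = j
        · subst hqj
          have h1' := h1.flip
          have h2' := h2.flip
          have hδε := apex h1' h2' (fun h => hpi h.symm) hyz
          exact Or.inr ⟨q, i, p, -δ, fun h => hpi h.symm, h1', hδε ▸ h2'⟩
        · -- disjoint pairs: contradiction
          exfalso
          obtain ⟨_, hδ, hyi, hyj, hly⟩ := h1
          obtain ⟨_, hε, hzp, hzq, hlz⟩ := h2
          refine three_diff_not_adj hij (fun h => hpi h.symm) (fun h => hpj h.symm) ?_ ?_ ?_ hyz
          · have : z.1 i = x.1 i := (hlz i (fun h => hpi h.symm) (fun h => hqi h.symm)).symm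
            rw [this]; omega
          · have : z.1 j = x.1 j := (hlz j (fun h => hpj h.symm) (fun h => hqj h.symm)).symm
            rw [this]; omega
          · have : y.1 p = x.1 p := (hly p hpi hpj).symm
            rw [this]; omega


lemma clique_adj {s : Finset (SRVertex m n)} (hs : (SR m n).IsClique s)
    {u v : SRVertex m n} (hu : u ∈ s) (hv : v ∈ s) (huv : u ≠ v) : (SR m n).Adj u v :=
  hs (Finset.mem_coe.mpr hu) (Finset.mem_coe.mpr hv) huv

/-- In the line case, every clique member agrees with `x` outside `{i, j}`. -/
lemma line_case {s : Finset (SRVertex m n)} (hs : (SR m n).IsClique s)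
    {x y z : SRVertex m n} (hx : x ∈ s) (hy : y ∈ s) (hz : z ∈ s)
    {i j : Fin m} {δ ε : ℤ} (hxy : Move x y i j δ) (hxz : Move x z i j ε) (hyzne : y ≠ z) :
    ∀ v ∈ s, ∀ l, l ≠ i → l ≠ j → v.1 l = x.1 l := by
  have hδε : δ ≠ ε := fun h => hyzne (move_eq hxy (h ▸ hxz))
  intro v hv
  by_cases hvx : v = x
  · subst hvx; intro l _ _; rfl
  by_cases hvy : v = y
  · subst hvy; intro l hli hlj; exact (hxy.2.2.2.2 l hli hlj).symm
  by_cases hvz : v = z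
  · subst hvz; intro l hli hlj; exact (hxz.2.2.2.2 l hli hlj).symm
  have haxy : (SR m n).Adj x y := adj_iff_move.mpr ⟨i, j, δ, hxy⟩
  have haxv : (SR m n).Adj x v := clique_adj hs hx hv (fun h => hvx h.symm)
  have hayv : (SR m n).Adj y v := clique_adj hs hy hv (fun h => hvy h.symm)
  have havz : (SR m n).Adj v z := clique_adj hs hv hz hvz
  rcases triangle haxy haxv hayv with ⟨i', j', δ', ε', h1, h2⟩ | ⟨a, b, c, γ, hbc, h1, h2⟩
  · rcases move_unique hxy h1 with ⟨h1a, h1b, -⟩ | ⟨h1a, h1b, -⟩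
    · intro l hli hlj
      exact (h2.2.2.2.2 l (by rw [h1a]; exact hli) (by rw [h1b]; exact hlj)).symm
    · intro l hli hlj
      exact (h2.2.2.2.2 l (by rw [h1a]; exact hlj) (by rw [h1b]; exact hli)).symm
  · exfalso
    rcases move_unique hxy h1 with ⟨hpa, hqb, hgd⟩ | ⟨hpa, hqb, hgd⟩
    · -- a = i, b = j, γ = δ ; h2 : Move x v a c γ
      rw [hpa, hgd] at h2
      rw [hqb] at hbc
      obtain ⟨hic, hγ0, hvi, hvc, hlv⟩ := h2
      obtain ⟨hij, hε0, hzi, hzj, hlz⟩ := hxz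
      have hvj := hlv j hij.symm hbc
      have hzc := hlz c (fun h => hic h.symm) (fun h => hbc h.symm)
      exact three_diff_not_adj hij hic hbc (by omega) (by omega) (by omega) havz
    · -- a = j, b = i, γ = -δ ; h2 : Move x v j c (-δ)
      rw [hpa, hgd] at h2
      rw [hqb] at hbc
      obtain ⟨hjc, hγ0, hvj, hvc, hlv⟩ := h2
      obtain ⟨hij, hε0, hzi, hzj, hlz⟩ := hxz
      have hvi := hlv i hij hbc
      have hzc := hlz c (fun h => hbc h.symm) (fun h => hjc h.symm)
      have hδ0 : δ ≠ 0 := hxy.2.1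
      exact three_diff_not_adj hij hbc hjc (by omega) (by omega) (by omega) havz

/-- In the star case, every clique member differs from `w = x - δ·e_a` in exactly one spot. -/
lemma star_case {s : Finset (SRVertex m n)} (hs : (SR m n).IsClique s)
    {x y z : SRVertex m n} (hx : x ∈ s) (hy : y ∈ s) (hz : z ∈ s)
    {a b c : Fin m} {δ : ℤ} (hbc : b ≠ c) (hxy : Move x y a b δ) (hxz : Move x z a c δ) :
    ∀ v ∈ s, ∃ r : Fin m,
      (∀ l, l ≠ r → (v.1 l : ℤ) = (x.1 l : ℤ) - (if l = a then δ else 0)) ∧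
      (v.1 r : ℤ) ≠ (x.1 r : ℤ) - (if r = a then δ else 0) := by
  have hab : a ≠ b := hxy.1
  have hac : a ≠ c := hxz.1
  have hδ0 : δ ≠ 0 := hxy.2.1
  intro v hv
  by_cases hvx : v = x
  · subst hvx
    refine ⟨a, fun l hl => by rw [if_neg hl, sub_zero], ?_⟩
    rw [if_pos rfl]; omega
  by_cases hvy : v = y
  · subst hvy
    obtain ⟨-, -, hya, hyb, hly⟩ := hxy
    refine ⟨b, fun l hl => ?_, ?_⟩
    · by_cases hla : l = a
      · subst hla; rw [if_pos rfl]; omega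
      · rw [if_neg hla, sub_zero]; exact_mod_cast (hly l hla hl).symm
    · rw [if_neg (fun h => hab h.symm), sub_zero]; omega
  by_cases hvz : v = z
  · subst hvz
    obtain ⟨-, -, hza, hzc, hlz⟩ := hxz
    refine ⟨c, fun l hl => ?_, ?_⟩
    · by_cases hla : l = a
      · subst hla; rw [if_pos rfl]; omega
      · rw [if_neg hla, sub_zero]; exact_mod_cast (hlz l hla hl).symm
    · rw [if_neg (fun h => hac h.symm), sub_zero]; omega
  have haxy : (SR m n).Adj x y := adj_iff_move.mpr ⟨a, b, δ, hxy⟩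
  have haxv : (SR m n).Adj x v := clique_adj hs hx hv (fun h => hvx h.symm)
  have hayv : (SR m n).Adj y v := clique_adj hs hy hv (fun h => hvy h.symm)
  have havz : (SR m n).Adj v z := clique_adj hs hv hz hvz
  obtain ⟨-, -, hza, hzc, hlz⟩ := hxz
  rcases triangle haxy haxv hayv with ⟨i', j', δ', ε', h1, h2⟩ | ⟨p, q, r0, γ0, hqr, h1, h2⟩
  · -- (x,y,v) in line position: contradiction using z
    exfalso
    have hmv : ∃ γ : ℤ, Move x v a b γ := by
      rcases move_unique hxy h1 with ⟨hpa, hqb, -⟩ | ⟨hpa, hqb, -⟩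
      · rw [hpa, hqb] at h2; exact ⟨ε', h2⟩
      · rw [hpa, hqb] at h2; exact ⟨-ε', h2.flip⟩
    obtain ⟨γ, hγmv⟩ := hmv
    obtain ⟨-, hγ0, hva, hvb, hlv⟩ := hγmv
    by_cases hγδ : γ = δ
    · subst hγδ
      exact hvy (move_eq hxy ⟨hab, hγ0, hva, hvb, hlv⟩).symm
    · have hvc := hlv c (fun h => hac h.symm) (fun h => hbc h.symm)
      have hzb := hlz b (fun h => hab h.symm) hbc
      exact three_diff_not_adj hab hac hbc (by omega) (by omega) (by omega) havz
  · rcases move_unique hxy h1 with ⟨hpa, hqb, hgd⟩ | ⟨hpa, hqb, hgd⟩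
    · -- h2 : Move x v a r0 δ
      rw [hpa, hgd] at h2
      obtain ⟨har, -, hva, hvr, hlv⟩ := h2
      refine ⟨r0, fun l hl => ?_, ?_⟩
      · by_cases hla : l = a
        · subst hla; rw [if_pos rfl]; omega
        · rw [if_neg hla, sub_zero]; exact_mod_cast (hlv l hla hl).symm
      · rw [if_neg (fun h => har h.symm), sub_zero]; omega
    · -- h2 : Move x v b r0 (-δ) : contradiction using z
      exfalso
      rw [hpa, hgd] at h2
      rw [hqb] at hqr
      obtain ⟨hbr, -, hvb, hvr, hlv⟩ := h2
      have hva := hlv a hab hqr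
      have hzb := hlz b (fun h => hab h.symm) hbc
      by_cases hrc : r0 = c
      · subst hrc
        exact three_diff_not_adj hab hac hbc (by omega) (by omega) (by omega) havz
      · have hzr := hlz r0 (fun h => hqr h.symm) hrc
        exact three_diff_not_adj hab hqr hbr (by omega) (by omega) (by omega) havz

lemma card_le_of_line {s : Finset (SRVertex m n)} {x : SRVertex m n} {i j : Fin m}
    (hij : i ≠ j) (hline : ∀ v ∈ s, ∀ l, l ≠ i → l ≠ j → v.1 l = x.1 l) :
    s.card ≤ n + 1 := by
  have h : s.card ≤ (Finset.range (n + 1)).card := by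
    apply Finset.card_le_card_of_injOn (fun v : SRVertex m n => v.1 i)
    · intro v hv
      rw [Finset.mem_coe, Finset.mem_range, Nat.lt_succ_iff]
      calc v.1 i ≤ ∑ l, v.1 l :=
            Finset.single_le_sum (fun l _ => Nat.zero_le _) (Finset.mem_univ i)
        _ = n := v.2
    · intro v hv w hw hvw
      rw [Finset.mem_coe] at hv hw
      simp only at hvw
      have hagree : ∀ l, l ≠ i → l ≠ j → v.1 l = w.1 l := fun l h1 h2 =>
        (hline v hv l h1 h2).trans (hline w hw l h1 h2).symm
      have hsum := sum_pair_eq hij hagree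
      apply Subtype.ext; funext l
      by_cases hli : l = i
      · subst hli; exact hvw
      by_cases hlj : l = j
      · subst hlj; omega
      · exact hagree l hli hlj
  simpa using h

lemma card_le_of_star (hm : 0 < m) {s : Finset (SRVertex m n)} {w : Fin m → ℤ}
    (hstar : ∀ v ∈ s, ∃ r : Fin m,
      (∀ l, l ≠ r → (v.1 l : ℤ) = w l) ∧ (v.1 r : ℤ) ≠ w r) :
    s.card ≤ m := by
  haveI : Inhabited (Fin m) := ⟨⟨0, hm⟩⟩
  choose! r hr1 hr2 using hstar
  have h : s.card ≤ (Finset.univ : Finset (Fin m)).card := by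
    apply Finset.card_le_card_of_injOn r (fun _ _ => Finset.mem_univ _)
    intro v hv v' hv' hrr
    rw [Finset.mem_coe] at hv hv'
    apply Subtype.ext; funext l
    by_cases hl : l = r v
    · subst hl
      have h1 : ∑ l, (v.1 l : ℤ) = (n : ℤ) := by exact_mod_cast v.2
      have h2 : ∑ l, (v'.1 l : ℤ) = (n : ℤ) := by exact_mod_cast v'.2
      have hsame : ∑ l ∈ Finset.univ.erase (r v), (v.1 l : ℤ)
          = ∑ l ∈ Finset.univ.erase (r v), (v'.1 l : ℤ) := by
        refine Finset.sum_congr rfl fun l hl => ?_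
        have hne := Finset.ne_of_mem_erase hl
        rw [hr1 v hv l hne, ← hr1 v' hv' l (by rw [← hrr]; exact hne)]
      have hs1 := Finset.add_sum_erase Finset.univ (fun l => (v.1 l : ℤ))
        (Finset.mem_univ (r v))
      have hs2 := Finset.add_sum_erase Finset.univ (fun l => (v'.1 l : ℤ))
        (Finset.mem_univ (r v))
      have hZ : (v.1 (r v) : ℤ) = (v'.1 (r v) : ℤ) := by
        linarith
      exact_mod_cast hZ
    · have hl' : l ≠ r v' := by rw [← hrr]; exact hl
      have := (hr1 v hv l hl).trans (hr1 v' hv' l hl').symm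
      exact_mod_cast this
  simpa using h

/-- A maximum clique along a line: `(a, n-a, 0, …, 0)`. -/
def lineVert (hm : 2 ≤ m) (a : Fin (n + 1)) : SRVertex m n :=
  ⟨fun l => (if l = (⟨0, by omega⟩ : Fin m) then (a : ℕ) else 0) +
      (if l = (⟨1, by omega⟩ : Fin m) then n - (a : ℕ) else 0), by
    rw [Finset.sum_add_distrib, Finset.sum_ite_eq' Finset.univ, Finset.sum_ite_eq' Finset.univ]
    have := a.isLt
    simp only [Finset.mem_univ, if_pos]
    omega⟩

lemma lineVert_adj (hm : 2 ≤ m) {a b : Fin (n + 1)} (hab : a ≠ b) :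
    (SR m n).Adj (lineVert hm a) (lineVert hm b) := by
  have hvne : (a : ℕ) ≠ (b : ℕ) := fun h => hab (Fin.ext h)
  have ha := a.isLt
  have hb := b.isLt
  have h01 : (⟨1, by omega⟩ : Fin m) ≠ (⟨0, by omega⟩ : Fin m) := by
    simp [Fin.ext_iff]
  refine adj_iff_move.mpr ⟨⟨1, by omega⟩, ⟨0, by omega⟩, (b : ℤ) - (a : ℤ), h01, ?_, ?_, ?_, ?_⟩
  · omega
  · simp only [lineVert, Fin.mk.injEq]
    norm_num
    omega
  · simp only [lineVert, Fin.mk.injEq]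
    norm_num
  · intro l hl1 hl0
    simp only [lineVert, if_neg hl0, if_neg hl1]

lemma lineVert_inj (hm : 2 ≤ m) : Function.Injective (lineVert (n := n) hm) := by
  intro a b h
  have := congrArg (fun v : SRVertex m n => v.1 ⟨0, by omega⟩) h
  simp only [lineVert, Fin.mk.injEq] at this
  norm_num at this
  exact Fin.ext this

/-- A maximum clique as a star: `(n-1)·e₀ + e_i`. -/
def starVert (hm : 2 ≤ m) (hn : 1 ≤ n) (i : Fin m) : SRVertex m n :=
  ⟨fun l => (if l = i then 1 else 0) + (if l = (⟨0, by omega⟩ : Fin m) then n - 1 else 0), by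
    rw [Finset.sum_add_distrib, Finset.sum_ite_eq' Finset.univ, Finset.sum_ite_eq' Finset.univ]
    simp only [Finset.mem_univ, if_pos]
    omega⟩

lemma starVert_adj (hm : 2 ≤ m) (hn : 1 ≤ n) {i j : Fin m} (hij : i ≠ j) :
    (SR m n).Adj (starVert hm hn i) (starVert hm hn j) := by
  refine adj_iff_move.mpr ⟨i, j, 1, hij, one_ne_zero, ?_, ?_, ?_⟩
  · simp only [starVert, if_neg hij]
    norm_num
  · simp only [starVert, if_neg (Ne.symm hij)]
    norm_num
    omega
  · intro l hli hlj
    simp only [starVert, if_neg hli, if_neg hlj]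

lemma starVert_inj (hm : 2 ≤ m) (hn : 1 ≤ n) : Function.Injective (starVert (n := n) hm hn) := by
  intro i j h
  by_contra hij
  have := (starVert_adj hm hn hij)
  rw [h] at this
  exact (SR m n).loopless.irrefl _ this

end SRAux

open SRAux in
/-- For `m ≥ 2` and `n ≥ 1`, the clique number of `SR(m,n)` is `max m (n+1)`. -/
theorem SR_cliqueNum (m n : ℕ) (hm : 2 ≤ m) (hn : 1 ≤ n) :
    (SR m n).cliqueNum = max m (n + 1) := by
  apply le_antisymm
  · obtain ⟨s, hsN⟩ := (SR m n).exists_isNClique_cliqueNum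
    obtain ⟨hsc, hscard⟩ := hsN
    rw [← hscard]
    by_cases h3 : 3 ≤ s.card
    · have hpos : 0 < s.card := by omega
      obtain ⟨x, hx⟩ := Finset.card_pos.mp hpos
      have h2 : 0 < (s.erase x).card := by
        rw [Finset.card_erase_of_mem hx]; omega
      obtain ⟨y, hy'⟩ := Finset.card_pos.mp h2
      obtain ⟨hyx, hy⟩ := Finset.mem_erase.mp hy'
      have h1 : 0 < ((s.erase x).erase y).card := by
        rw [Finset.card_erase_of_mem hy', Finset.card_erase_of_mem hx]; omega
      obtain ⟨z, hz'⟩ := Finset.card_pos.mp h1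
      obtain ⟨hzy, hz''⟩ := Finset.mem_erase.mp hz'
      obtain ⟨hzx, hz⟩ := Finset.mem_erase.mp hz''
      have haxy : (SR m n).Adj x y := clique_adj hsc hx hy (fun h => hyx h.symm)
      have haxz : (SR m n).Adj x z := clique_adj hsc hx hz (fun h => hzx h.symm)
      have hayz : (SR m n).Adj y z := clique_adj hsc hy hz (fun h => hzy h.symm)
      rcases triangle haxy haxz hayz with ⟨i, j, δ, ε, h1', h2'⟩ | ⟨a, b, c, δ, hbc, h1', h2'⟩
      · have hline := line_case hsc hx hy hz h1' h2' (fun h => hzy (h.symm))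
        exact le_trans (card_le_of_line h1'.1 hline) (le_max_right _ _)
      · have hstar := star_case hsc hx hy hz hbc h1' h2'
        exact le_trans
          (card_le_of_star (by omega) (w := fun l => (x.1 l : ℤ) - (if l = a then δ else 0)) hstar)
          (le_max_left _ _)
    · have := le_max_right m (n + 1)
      omega
  · apply max_le
    · have hclique : (SR m n).IsClique (Finset.univ.image (starVert hm hn)) := by
        intro u hu v hv huv
        simp only [Finset.coe_image, Set.mem_image] at hu hv
        obtain ⟨i, -, rfl⟩ := hu
        obtain ⟨j, -, rfl⟩ := hv
        exact starVert_adj hm hn (fun h => huv (congrArg _ h))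
      have hb := SimpleGraph.IsClique.card_le_cliqueNum (tc := hclique)
      rwa [Finset.card_image_of_injective _ (starVert_inj hm hn), Finset.card_univ,
        Fintype.card_fin] at hb
    · have hclique : (SR m n).IsClique (Finset.univ.image (lineVert (n := n) hm)) := by
        intro u hu v hv huv
        simp only [Finset.coe_image, Set.mem_image] at hu hv
        obtain ⟨a, -, rfl⟩ := hu
        obtain ⟨b, -, rfl⟩ := hv
        exact lineVert_adj hm (fun h => huv (congrArg _ h))
      have hb := SimpleGraph.IsClique.card_le_cliqueNum (tc := hclique)
      rwa [Finset.card_image_of_injective _ (lineVert_inj hm), Finset.card_univ,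
        Fintype.card_fin] at hb
end

section
/- The graph SR(m,n) contains no induced K_{1,1,4}: there do not exist adjacent vertices u, v of SR(m,n) and four pairwise distinct, pairwise nonadjacent vertices w₁, w₂, w₃, w₄, each of which is adjacent to both u and v. -/
open Matrix Polynomial

section Aux
variable {m n : ℕ}

lemma SR_two_le_diff (x y : SRVertex m n) (h : x ≠ y) :
    2 ≤ (Finset.univ.filter fun j => x.1 j ≠ y.1 j).card := by
  by_contra hlt
  push_neg at hlt
  interval_cases hc : (Finset.univ.filter fun j => x.1 j ≠ y.1 j).card
  · rw [Finset.card_eq_zero, Finset.filter_eq_empty_iff] at hc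
    exact h (Subtype.ext (funext fun i => not_ne_iff.mp (hc (Finset.mem_univ i))))
  · rw [Finset.card_eq_one] at hc
    obtain ⟨i, hi⟩ := hc
    have hoff : ∀ j ∈ Finset.univ.erase i, x.1 j = y.1 j := by
      intro j hj
      by_contra hne
      have : j ∈ Finset.univ.filter fun j => x.1 j ≠ y.1 j := by
        simp [hne]
      rw [hi, Finset.mem_singleton] at this
      exact (Finset.mem_erase.mp hj).1 this
    have hxi : i ∈ Finset.univ.filter fun j => x.1 j ≠ y.1 j := by
      rw [hi]; exact Finset.mem_singleton_self i
    have hxi' : x.1 i ≠ y.1 i := by simpa using hxi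
    have hsum : x.1 i + ∑ j ∈ Finset.univ.erase i, x.1 j
        = y.1 i + ∑ j ∈ Finset.univ.erase i, y.1 j := by
      rw [Finset.add_sum_erase _ _ (Finset.mem_univ i),
          Finset.add_sum_erase _ _ (Finset.mem_univ i), x.2, y.2]
    rw [Finset.sum_congr rfl hoff] at hsum
    exact hxi' (Nat.add_right_cancel hsum)

lemma SR_pair_other {s : Finset (Fin m)} {a : Fin m} (hc : s.card = 2) (ha : a ∈ s) :
    ∃ c, c ≠ a ∧ s = {a, c} := by
  obtain ⟨x, y, hxy, rfl⟩ := Finset.card_eq_two.mp hc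
  rcases Finset.mem_insert.mp ha with rfl | hy
  · exact ⟨y, fun h => hxy h.symm, rfl⟩
  · rw [Finset.mem_singleton] at hy
    subst hy
    exact ⟨x, hxy, Finset.pair_comm x a⟩

/-- Core classification: a common neighbor of `u,v` which is neither of
type A nor type B agrees with `u` away from `{a,b}`. -/
lemma SR_classify {u v w : SRVertex m n} {a b : Fin m} (hab : a ≠ b)
    (hD : (Finset.univ.filter fun i => u.1 i ≠ v.1 i) = {a, b})
    (hwu : (Finset.univ.filter fun i => w.1 i ≠ u.1 i).card = 2)
    (hwv : (Finset.univ.filter fun i => w.1 i ≠ v.1 i).card = 2)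
    (hA : ¬ (w.1 a = v.1 a ∧ w.1 b = u.1 b))
    (hB : ¬ (w.1 a = u.1 a ∧ w.1 b = v.1 b)) :
    ∀ i, i ≠ a → i ≠ b → w.1 i = u.1 i := by
  have huva : u.1 a ≠ v.1 a := by
    have : a ∈ Finset.univ.filter fun i => u.1 i ≠ v.1 i := by
      rw [hD]; simp
    simpa using this
  have huvb : u.1 b ≠ v.1 b := by
    have : b ∈ Finset.univ.filter fun i => u.1 i ≠ v.1 i := by
      rw [hD]; simp
    simpa using this
  intro c hca hcb
  by_contra hwc
  have huvc : u.1 c = v.1 c := by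
    by_contra hne
    have : c ∈ ({a, b} : Finset (Fin m)) := by rw [← hD]; simp [hne]
    simp at this
    tauto
  have hwvc : w.1 c ≠ v.1 c := fun h => hwc (h.trans huvc.symm)
  by_cases hwa : w.1 a = u.1 a
  · -- then w.1 a ≠ v.1 a, so D(w,v) = {a, c}, so w.1 b = v.1 b : type B, contradiction
    have hwav : w.1 a ≠ v.1 a := fun h => huva (hwa.symm.trans h)
    have hsub : ({a, c} : Finset (Fin m)) ⊆ Finset.univ.filter fun i => w.1 i ≠ v.1 i := by
      intro i hi
      rcases Finset.mem_insert.mp hi with rfl | hi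
      · simp [hwav]
      · rw [Finset.mem_singleton] at hi; subst hi; simp [hwvc]
    have heq : (Finset.univ.filter fun i => w.1 i ≠ v.1 i) = {a, c} :=
      (Finset.eq_of_subset_of_card_le hsub (by
        rw [hwv, Finset.card_insert_of_notMem (by simpa using (Ne.symm hca))]
        simp)).symm
    have hwb : w.1 b = v.1 b := by
      by_contra hne
      have : b ∈ ({a, c} : Finset (Fin m)) := by rw [← heq]; simp [hne]
      simp at this
      rcases this with h | h
      · exact hab h.symm
      · exact hcb h.symm
    exact hB ⟨hwa, hwb⟩
  · -- w.1 a ≠ u.1 a, so D(w,u) = {a,c}, so w.1 b = u.1 b; then b ∈ D(w,v), so D(w,v) = {b,c}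
    -- hence w.1 a = v.1 a : type A, contradiction
    have hsub : ({a, c} : Finset (Fin m)) ⊆ Finset.univ.filter fun i => w.1 i ≠ u.1 i := by
      intro i hi
      rcases Finset.mem_insert.mp hi with rfl | hi
      · simp [hwa]
      · rw [Finset.mem_singleton] at hi; subst hi; simp [hwc]
    have heq : (Finset.univ.filter fun i => w.1 i ≠ u.1 i) = {a, c} :=
      (Finset.eq_of_subset_of_card_le hsub (by
        rw [hwu, Finset.card_insert_of_notMem (by simpa using (Ne.symm hca))]
        simp)).symm
    have hwb : w.1 b = u.1 b := by
      by_contra hne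
      have : b ∈ ({a, c} : Finset (Fin m)) := by rw [← heq]; simp [hne]
      simp at this
      rcases this with h | h
      · exact hab h.symm
      · exact hcb h.symm
    have hwbv : w.1 b ≠ v.1 b := fun h => huvb (hwb.symm.trans h)
    have hsub2 : ({b, c} : Finset (Fin m)) ⊆ Finset.univ.filter fun i => w.1 i ≠ v.1 i := by
      intro i hi
      rcases Finset.mem_insert.mp hi with rfl | hi
      · simp [hwbv]
      · rw [Finset.mem_singleton] at hi; subst hi; simp [hwvc]
    have heq2 : (Finset.univ.filter fun i => w.1 i ≠ v.1 i) = {b, c} :=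
      (Finset.eq_of_subset_of_card_le hsub2 (by
        rw [hwv, Finset.card_insert_of_notMem (by simpa using (Ne.symm hcb))]
        simp)).symm
    have hwav : w.1 a = v.1 a := by
      by_contra hne
      have : a ∈ ({b, c} : Finset (Fin m)) := by rw [← heq2]; simp [hne]
      simp at this
      rcases this with h | h
      · exact hab h
      · exact hca h.symm
    exact hA ⟨hwav, hwb⟩

end Aux

section Aux2
variable {m n : ℕ}

/-- If `wi` and `wj` both differ from `u` in exactly two places, including a common
place `a` where they agree with each other, then they differ in at most two places. -/
lemma SR_diff_le {wi wj u : SRVertex m n} {a : Fin m}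
    (h1 : (Finset.univ.filter fun k => wi.1 k ≠ u.1 k).card = 2)
    (h2 : (Finset.univ.filter fun k => wj.1 k ≠ u.1 k).card = 2)
    (hia : wi.1 a ≠ u.1 a) (hja : wj.1 a ≠ u.1 a) (haeq : wi.1 a = wj.1 a) :
    (Finset.univ.filter fun k => wi.1 k ≠ wj.1 k).card ≤ 2 := by
  obtain ⟨c, hca, hc⟩ := SR_pair_other h1 (Finset.mem_filter.mpr ⟨Finset.mem_univ a, hia⟩)
  obtain ⟨c', hc'a, hc'⟩ := SR_pair_other h2 (Finset.mem_filter.mpr ⟨Finset.mem_univ a, hja⟩)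
  have hsub : (Finset.univ.filter fun k => wi.1 k ≠ wj.1 k) ⊆ {c, c'} := by
    intro k hk
    have hk' : wi.1 k ≠ wj.1 k := by simpa using hk
    have hk2 : wi.1 k ≠ u.1 k ∨ wj.1 k ≠ u.1 k := by
      by_contra hcon
      push_neg at hcon
      exact hk' (hcon.1.trans hcon.2.symm)
    rcases hk2 with h | h
    · have : k ∈ ({a, c} : Finset (Fin m)) := by rw [← hc]; simp [h]
      rcases Finset.mem_insert.mp this with rfl | h'
      · exact absurd haeq hk'
      · rw [Finset.mem_singleton] at h'; subst h'; simp
    · have : k ∈ ({a, c'} : Finset (Fin m)) := by rw [← hc']; simp [h]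
      rcases Finset.mem_insert.mp this with rfl | h'
      · exact absurd haeq hk'
      · rw [Finset.mem_singleton] at h'; subst h'; simp
  exact (Finset.card_le_card hsub).trans
    ((Finset.card_insert_le _ _).trans (by simp))

end Aux2


/-- `SR(m,n)` contains no induced `K_{1,1,4}`: there are no adjacent vertices `u, v`
together with four pairwise distinct, pairwise nonadjacent vertices each adjacent
to both `u` and `v`. -/
theorem SR_no_induced_K114 (m n : ℕ) :
    ¬ ∃ (u v : SRVertex m n) (w : Fin 4 → SRVertex m n),
        (SR m n).Adj u v ∧
        (∀ i j : Fin 4, i ≠ j → w i ≠ w j ∧ ¬ (SR m n).Adj (w i) (w j)) ∧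
        (∀ i : Fin 4, (SR m n).Adj u (w i) ∧ (SR m n).Adj v (w i)) := by
  rintro ⟨u, v, w, huv, hpair, hcn⟩
  have huv' : (Finset.univ.filter fun i => u.1 i ≠ v.1 i).card = 2 := huv
  obtain ⟨a, b, hab, hD⟩ := Finset.card_eq_two.mp huv'
  have huva : u.1 a ≠ v.1 a := by
    have : a ∈ Finset.univ.filter fun i => u.1 i ≠ v.1 i := by rw [hD]; simp
    simpa using this
  have huvb : u.1 b ≠ v.1 b := by
    have : b ∈ Finset.univ.filter fun i => u.1 i ≠ v.1 i := by rw [hD]; simp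
    simpa using this
  have hwu : ∀ i, (Finset.univ.filter fun k => (w i).1 k ≠ u.1 k).card = 2 :=
    fun i => ((hcn i).1.symm : (SR m n).Adj (w i) u)
  have hwv : ∀ i, (Finset.univ.filter fun k => (w i).1 k ≠ v.1 k).card = 2 :=
    fun i => ((hcn i).2.symm : (SR m n).Adj (w i) v)
  classical
  obtain ⟨i, j, hij, hf⟩ := Fintype.exists_ne_map_eq_of_card_lt
    (fun i : Fin 4 => if (w i).1 a = v.1 a ∧ (w i).1 b = u.1 b then (0 : Fin 3)
      else if (w i).1 a = u.1 a ∧ (w i).1 b = v.1 b then 1 else 2) (by simp)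
  obtain ⟨hne, hnadj⟩ := hpair i j hij
  have hnadj' : (Finset.univ.filter fun k => (w i).1 k ≠ (w j).1 k).card ≠ 2 := hnadj
  have hge : 2 ≤ (Finset.univ.filter fun k => (w i).1 k ≠ (w j).1 k).card :=
    SR_two_le_diff _ _ hne
  have key : (Finset.univ.filter fun k => (w i).1 k ≠ (w j).1 k).card ≤ 2 → False :=
    fun hle => hnadj' (le_antisymm hle hge)
  split_ifs at hf with hi1 hj1 hj2 hi2 hj1' hj2' hj1'' hj2''
  · -- both type A
    exact key (SR_diff_le (hwu i) (hwu j)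
      (fun h => huva (h.symm.trans hi1.1)) (fun h => huva (h.symm.trans hj1.1))
      (hi1.1.trans hj1.1.symm))
  · exact absurd hf (by decide)
  · exact absurd hf (by decide)
  · exact absurd hf (by decide)
  · -- both type B
    exact key (SR_diff_le (hwv i) (hwv j)
      (fun h => huva (hi2.1.symm.trans h)) (fun h => huva (hj2'.1.symm.trans h))
      (hi2.1.trans hj2'.1.symm))
  · exact absurd hf (by decide)
  · exact absurd hf (by decide)
  · exact absurd hf (by decide)
  · -- both type L
    have hLi := SR_classify hab hD (hwu i) (hwv i) hi1 hi2
    have hLj := SR_classify hab hD (hwu j) (hwv j) hj1'' hj2''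
    have hsub : (Finset.univ.filter fun k => (w i).1 k ≠ (w j).1 k)
        ⊆ ({a, b} : Finset (Fin m)) := by
      intro k hk
      have hk' : (w i).1 k ≠ (w j).1 k := by simpa using hk
      by_contra hkab
      have hka : k ≠ a := fun h => hkab (by rw [h]; simp)
      have hkb : k ≠ b := fun h => hkab (by rw [h]; simp)
      exact hk' ((hLi k hka hkb).trans (hLj k hka hkb).symm)
    exact key ((Finset.card_le_card hsub).trans
      ((Finset.card_insert_le _ _).trans (by simp)))
end
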